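/- arXiv:2311.08108 — 12 statements merged into one kernel-verified Lean document; each statement's English description precedes it below -/
import Mathlib

section
/- Let ρ = U(σ_1 ⊗ ⋯ ⊗ σ_L)U† be an FDQC state of depth ℓ on a chain of L qubits, and let A, B, C be three disjoint consecutive intervals of qubits, with B separating A from C and |B| ≥ 2ℓ − 1. Then for every integer n ≥ 1, Tr((ρ_{A∪B∪C})^n) · Tr((ρ_B)^n) = Tr((ρ_{A∪B})^n) · Tr((ρ_{B∪C})^n). -/
open Matrix

/-- Computational-basis configurations of a chain of `L` qubits. -/
abbrev QubitConf (L : ℕ) := Fin L → Fin 2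

/-- Linear operators on the Hilbert space `(ℂ²)^{⊗L}`, written as matrices in the
computational basis. -/
abbrev QubitOp (L : ℕ) := Matrix (QubitConf L) (QubitConf L) ℂ

/-- The operator acting as the two-qubit gate `g` on the qubits `a, b` and as the identity
on all other qubits. -/
noncomputable def gateAt (L : ℕ) (a b : Fin L)
    (g : Matrix (Fin 2 × Fin 2) (Fin 2 × Fin 2) ℂ) : QubitOp L :=
  fun f f' => g (f a, f b) (f' a, f' b) *
    ∏ i ∈ Finset.univ \ ({a, b} : Finset (Fin L)), (if f i = f' i then (1 : ℂ) else 0)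

/-- `V` is a brickwork layer with offset `p ∈ {0,1}`: a product of unitary two-qubit gates
acting on the disjoint nearest-neighbour pairs `(2j + p, 2j + p + 1)`. -/
def IsBrickLayer (L p : ℕ) (V : QubitOp L) : Prop :=
  ∃ g : ℕ → Matrix (Fin 2 × Fin 2) (Fin 2 × Fin 2) ℂ,
    (∀ j, g j ∈ Matrix.unitaryGroup (Fin 2 × Fin 2) ℂ) ∧
    V = ((List.range L).filterMap (fun j =>
          if h : 2 * j + p + 1 < L then
            some (gateAt L ⟨2 * j + p, by omega⟩ ⟨2 * j + p + 1, h⟩ (g j))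
          else none)).prod

/-- `U` is a local quantum circuit of depth `ℓ`: `U = V_ℓ ⋯ V₂ V₁`, where the odd layers
couple the qubit pairs `(0,1), (2,3), …` and the even layers couple `(1,2), (3,4), …`
(brickwork pattern). -/
def IsLocalCircuit (L ℓ : ℕ) (U : QubitOp L) : Prop :=
  ∃ V : ℕ → QubitOp L,
    (∀ t, 1 ≤ t → t ≤ ℓ → IsBrickLayer L ((t + 1) % 2) (V t)) ∧
    U = ((List.range ℓ).map (fun t => V (ℓ - t))).prod

/-- The product state `σ₁ ⊗ ⋯ ⊗ σ_L`. -/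
noncomputable def prodState (L : ℕ) (σ : Fin L → Matrix (Fin 2) (Fin 2) ℂ) : QubitOp L :=
  fun f g => ∏ i, σ i (f i) (g i)

open scoped ComplexOrder in
/-- `ρ` is a finite-depth quantum-circuit (FDQC) state of depth `ℓ`:
`ρ = U (σ₁ ⊗ ⋯ ⊗ σ_L) U†` with `U` a local circuit of depth `ℓ` and each `σ_j` a
single-qubit density matrix. -/
def IsFDQCState (L ℓ : ℕ) (ρ : QubitOp L) : Prop :=
  ∃ (U : QubitOp L) (σ : Fin L → Matrix (Fin 2) (Fin 2) ℂ),
    IsLocalCircuit L ℓ U ∧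
    (∀ i, (σ i).PosSemidef ∧ (σ i).trace = 1) ∧
    ρ = U * prodState L σ * Uᴴ

/-- The reduced density matrix of `ρ` on the set `S` of qubits (partial trace over the
complement of `S`). -/
noncomputable def reducedDM (L : ℕ) (S : Finset (Fin L)) (ρ : QubitOp L) :
    Matrix ({ i : Fin L // i ∈ S } → Fin 2) ({ i : Fin L // i ∈ S } → Fin 2) ℂ :=
  fun f g => ∑ h : { i : Fin L // i ∉ S } → Fin 2,
    ρ (fun i => if hi : i ∈ S then f ⟨i, hi⟩ else h ⟨i, hi⟩)
      (fun i => if hi : i ∈ S then g ⟨i, hi⟩ else h ⟨i, hi⟩)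

/-- The interval of qubits `{i : a ≤ i < b}` in a chain of `L` qubits. -/
def qInterval (L a b : ℕ) : Finset (Fin L) :=
  Finset.univ.filter (fun i => a ≤ (i : ℕ) ∧ (i : ℕ) < b)
namespace FDQC
variable {L : ℕ}

/-- restriction of a configuration to a subset -/
def res (S : Finset (Fin L)) (f : QubitConf L) : {i : Fin L // i ∈ S} → Fin 2 :=
  fun i => f i

/-- restriction to the complement -/
def resC (S : Finset (Fin L)) (f : QubitConf L) : {i : Fin L // i ∉ S} → Fin 2 :=
  fun i => f i

/-- glue two half-configurations -/
def glue (S : Finset (Fin L)) (u : {i : Fin L // i ∈ S} → Fin 2)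
    (h : {i : Fin L // i ∉ S} → Fin 2) : QubitConf L :=
  fun i => if hi : i ∈ S then u ⟨i, hi⟩ else h ⟨i, hi⟩

@[simp] lemma res_glue (S : Finset (Fin L)) (u h) : res S (glue S u h) = u := by
  funext i; simp [res, glue, i.2]

@[simp] lemma resC_glue (S : Finset (Fin L)) (u h) : resC S (glue S u h) = h := by
  funext i; simp [resC, glue, i.2]

@[simp] lemma glue_res (S : Finset (Fin L)) (f : QubitConf L) :
    glue S (res S f) (resC S f) = f := by
  funext i; by_cases hi : i ∈ S <;> simp [res, resC, glue, hi]

/-- splitting a sum over configurations -/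
lemma sum_glue (S : Finset (Fin L)) (F : QubitConf L → ℂ) :
    ∑ f : QubitConf L, F f = ∑ u, ∑ h, F (glue S u h) := by
  rw [← Fintype.sum_prod_type (f := fun p => F (glue S p.1 p.2))]
  apply Fintype.sum_bijective (fun f => (res S f, resC S f))
  · constructor
    · intro f g hfg
      have h1 := congrArg Prod.fst hfg
      have h2 := congrArg Prod.snd hfg
      simp only at h1 h2
      rw [← glue_res S f, ← glue_res S g, h1, h2]
    · intro ⟨u, h⟩; exact ⟨glue S u h, by simp⟩
  · intro f; simp

/-- delta function on a set of sites -/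
def dl (T : Finset (Fin L)) (f g : QubitConf L) : ℂ :=
  ∏ i ∈ T, if f i = g i then 1 else 0

lemma dl_boole (T : Finset (Fin L)) (f g : QubitConf L) :
    dl T f g = if (∀ i ∈ T, f i = g i) then 1 else 0 := by
  rw [dl, Finset.prod_boole]
  by_cases h : ∀ i ∈ T, f i = g i <;> simp [h]

lemma dl_compl (S : Finset (Fin L)) (f g : QubitConf L) :
    dl Sᶜ f g = if resC S f = resC S g then 1 else 0 := by
  rw [dl_boole]
  congr 1
  simp only [eq_iff_iff]
  constructor
  · intro h; funext i; exact h i (Finset.mem_compl.2 i.2)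
  · intro h i hi
    exact congrFun h ⟨i, Finset.mem_compl.1 hi⟩

/-- embedding an operator on `S` into the full chain -/
noncomputable def emb (S : Finset (Fin L))
    (k : Matrix ({i : Fin L // i ∈ S} → Fin 2) ({i : Fin L // i ∈ S} → Fin 2) ℂ) :
    QubitOp L :=
  fun f g => k (res S f) (res S g) * dl Sᶜ f g

lemma emb_one (S : Finset (Fin L)) : emb S 1 = (1 : QubitOp L) := by
  funext f g
  rw [emb, dl_compl, Matrix.one_apply, Matrix.one_apply]
  by_cases h : f = g
  · simp [h]
  · have : ¬(res S f = res S g ∧ resC S f = resC S g) := by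
      intro ⟨h1, h2⟩
      exact h (by rw [← glue_res S f, h1, h2, glue_res])
    rcases not_and_or.1 this with h1 | h2
    · simp [h1, h]
    · simp [h2, h]

lemma emb_mul (S : Finset (Fin L)) (k k') :
    emb S k * emb S k' = emb S (k * k') := by
  funext f g
  simp only [Matrix.mul_apply, emb, dl_compl]
  rw [sum_glue S]
  simp only [res_glue, resC_glue]
  rw [Finset.sum_comm]
  rw [Fintype.sum_eq_single (resC S f) ?_]
  · simp only [eq_self_iff_true, if_true, mul_one, one_mul]
    rw [Finset.sum_mul]
    apply Finset.sum_congr rfl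
    intro u _
    ring
  · intro h hne
    apply Finset.sum_eq_zero
    intro u _
    rw [if_neg (Ne.symm hne), mul_zero, zero_mul]

lemma emb_star (S : Finset (Fin L)) (k) : (emb S k)ᴴ = emb S kᴴ := by
  funext f g
  simp only [Matrix.conjTranspose_apply, emb, dl_compl, star_mul']
  by_cases h : resC S f = resC S g
  · rw [if_pos h.symm, if_pos h, star_one]
  · rw [if_neg (fun e => h e.symm), if_neg h, star_zero]

lemma dl_eq_zero {T : Finset (Fin L)} {f g : QubitConf L} {i : Fin L}
    (hi : i ∈ T) (hne : f i ≠ g i) : dl T f g = 0 :=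
  Finset.prod_eq_zero hi (if_neg hne)

lemma emb_inj (S : Finset (Fin L)) {k k'} (h : emb S k = emb S k') : k = k' := by
  funext u v
  have := congrFun (congrFun h (glue S u (fun _ => 0))) (glue S v (fun _ => 0))
  simpa [emb, dl_compl] using this

/-- lift of an operator on `S` to an operator on `T ⊇ S` -/
noncomputable def liftK (S T : Finset (Fin L)) (hST : S ⊆ T)
    (k : Matrix ({i : Fin L // i ∈ S} → Fin 2) ({i : Fin L // i ∈ S} → Fin 2) ℂ) :
    Matrix ({i : Fin L // i ∈ T} → Fin 2) ({i : Fin L // i ∈ T} → Fin 2) ℂ :=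
  fun u v => k (fun i => u ⟨i.1, hST i.2⟩) (fun i => v ⟨i.1, hST i.2⟩) *
    ∏ i ∈ (T \ S).attach,
      (if u ⟨i.1, (Finset.mem_sdiff.1 i.2).1⟩ = v ⟨i.1, (Finset.mem_sdiff.1 i.2).1⟩
        then (1 : ℂ) else 0)

lemma emb_mono {S T : Finset (Fin L)} (hST : S ⊆ T) (k) :
    emb S k = emb T (liftK S T hST k) := by
  funext f g
  simp only [emb, liftK]
  have h1 : (fun i : {i : Fin L // i ∈ S} => res T f ⟨i.1, hST i.2⟩) = res S f := rfl
  have h2 : (fun i : {i : Fin L // i ∈ S} => res T g ⟨i.1, hST i.2⟩) = res S g := rfl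
  rw [h1, h2, mul_assoc]
  congr 1
  have hattach : ∏ i ∈ (T \ S).attach,
      (if res T f ⟨i.1, (Finset.mem_sdiff.1 i.2).1⟩ = res T g ⟨i.1, (Finset.mem_sdiff.1 i.2).1⟩
        then (1 : ℂ) else 0) = ∏ i ∈ T \ S, (if f i = g i then (1:ℂ) else 0) := by
    rw [← Finset.prod_attach (T \ S) (fun i => if f i = g i then (1:ℂ) else 0)]
    exact Finset.prod_congr rfl (fun x _ => rfl)
  rw [hattach]
  have hsplit : Sᶜ = (T \ S) ∪ Tᶜ := by
    ext i
    simp only [Finset.mem_compl, Finset.mem_union, Finset.mem_sdiff]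
    constructor
    · intro hi; by_cases hT : i ∈ T
      · exact Or.inl ⟨hT, hi⟩
      · exact Or.inr hT
    · rintro (⟨_, hi⟩ | hi)
      · exact hi
      · exact fun hS => hi (hST hS)
  rw [dl, dl, hsplit, Finset.prod_union]
  exact Finset.disjoint_left.2
    (fun i hi hic => (Finset.mem_compl.1 hic) (Finset.mem_sdiff.1 hi).1)

lemma emb_mul_disjoint {S T : Finset (Fin L)} (hd : Disjoint S T) (k k') :
    emb S k * emb T k' =
      fun f g => k (res S f) (res S g) * k' (res T f) (res T g) * dl (S ∪ T)ᶜ f g := by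
  funext f g
  rw [Matrix.mul_apply]
  set h₀ : QubitConf L := fun i => if i ∈ S then g i else f i with hh₀
  rw [Fintype.sum_eq_single h₀ ?_]
  · have hrS : res S h₀ = res S g := by
      funext i; simp [res, hh₀, i.2]
    have hrT : res T h₀ = res T f := by
      funext i
      have : i.1 ∉ S := Finset.disjoint_right.mp hd i.2
      simp [res, hh₀, this]
    have hd1 : dl Sᶜ f h₀ = 1 := by
      rw [dl_boole, if_pos]
      intro i hi
      simp [hh₀, Finset.mem_compl.1 hi]
    have hd2 : dl Tᶜ h₀ g = dl (S ∪ T)ᶜ f g := by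
      have hsplit : Tᶜ = S ∪ (S ∪ T)ᶜ := by
        ext i
        simp only [Finset.mem_compl, Finset.mem_union]
        constructor
        · intro hi; by_cases hS : i ∈ S
          · exact Or.inl hS
          · exact Or.inr (by push_neg; exact ⟨hS, hi⟩)
        · rintro (hi | hi)
          · exact Finset.disjoint_left.mp hd hi
          · push_neg at hi; exact hi.2
      rw [dl, dl, hsplit, Finset.prod_union (by
        rw [Finset.disjoint_left]
        intro i hi hic
        simp only [Finset.mem_compl, Finset.mem_union] at hic
        exact hic (Or.inl hi))]
      have h1 : ∏ i ∈ S, (if h₀ i = g i then (1:ℂ) else 0) = 1 := by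
        apply Finset.prod_eq_one
        intro i hi; simp [hh₀, hi]
      rw [h1, one_mul]
      apply Finset.prod_congr rfl
      intro i hi
      simp only [Finset.mem_compl, Finset.mem_union] at hi
      push_neg at hi
      simp [hh₀, hi.1]
    rw [emb, emb, hrS, hrT, hd1, hd2, mul_one]
    ring
  · intro h hne
    obtain ⟨i, hi⟩ := Function.ne_iff.1 hne
    by_cases hiS : i ∈ S
    · have : h i ≠ g i := by simpa [hh₀, hiS] using hi
      have hz : dl Tᶜ h g = 0 :=
        dl_eq_zero (Finset.mem_compl.2 (Finset.disjoint_left.mp hd hiS)) this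
      simp [emb, hz]
    · have : f i ≠ h i := by
        intro e; exact hi (by simp [hh₀, hiS, e.symm])
      have hz : dl Sᶜ f h = 0 := dl_eq_zero (Finset.mem_compl.2 hiS) this
      simp [emb, hz]

lemma emb_comm_disjoint {S T : Finset (Fin L)} (hd : Disjoint S T) (k k') :
    Commute (emb S k) (emb T k') := by
  unfold Commute SemiconjBy
  rw [emb_mul_disjoint hd, emb_mul_disjoint hd.symm]
  funext f g
  rw [Finset.union_comm T S]
  ring

lemma emb_mem_unitary {S : Finset (Fin L)} {k} (hk : k ∈ Matrix.unitaryGroup _ ℂ) :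
    emb S k ∈ Matrix.unitaryGroup (QubitConf L) ℂ := by
  constructor
  · rw [Matrix.star_eq_conjTranspose, emb_star, emb_mul, ← Matrix.star_eq_conjTranspose,
      (Unitary.mem_iff.1 hk).1, emb_one]
  · rw [Matrix.star_eq_conjTranspose, emb_star, emb_mul, ← Matrix.star_eq_conjTranspose,
      (Unitary.mem_iff.1 hk).2, emb_one]

lemma unitary_of_emb {S : Finset (Fin L)} {k}
    (hC : emb S k ∈ Matrix.unitaryGroup (QubitConf L) ℂ) :
    k ∈ Matrix.unitaryGroup _ ℂ := by
  obtain ⟨h1, h2⟩ := Unitary.mem_iff.1 hC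
  rw [Matrix.star_eq_conjTranspose, emb_star, emb_mul, ← emb_one S] at h1 h2
  rw [Unitary.mem_iff, Matrix.star_eq_conjTranspose]
  exact ⟨emb_inj S h1, emb_inj S h2⟩

/-- the pair `{a,b}` configurations as `Fin 2 × Fin 2` -/
def pairEquiv (a b : Fin L) (hab : a ≠ b) :
    ({i : Fin L // i ∈ ({a, b} : Finset (Fin L))} → Fin 2) ≃ (Fin 2 × Fin 2) where
  toFun u := (u ⟨a, by simp⟩, u ⟨b, by simp⟩)
  invFun x := fun i => if i.1 = a then x.1 else x.2
  left_inv u := by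
    funext i
    rcases i with ⟨i, hi⟩
    by_cases h : i = a
    · subst h; simp
    · have hb : i = b := by
        rcases Finset.mem_insert.1 hi with h' | h'
        · exact absurd h' h
        · exact Finset.mem_singleton.1 h'
      subst hb
      simp [h]
  right_inv x := by
    ext
    · simp
    · simp [Ne.symm hab]

/-- the two-qubit gate as a matrix on pair configurations -/
noncomputable def gk (a b : Fin L) (hab : a ≠ b)
    (g : Matrix (Fin 2 × Fin 2) (Fin 2 × Fin 2) ℂ) :
    Matrix ({i : Fin L // i ∈ ({a, b} : Finset (Fin L))} → Fin 2)
      ({i : Fin L // i ∈ ({a, b} : Finset (Fin L))} → Fin 2) ℂ :=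
  g.submatrix (pairEquiv a b hab) (pairEquiv a b hab)

lemma gateAt_eq_emb (a b : Fin L) (hab : a ≠ b) (g) :
    gateAt L a b g = emb {a, b} (gk a b hab g) := by
  funext f f'
  simp only [gateAt, emb, gk, dl, Matrix.submatrix_apply]
  rw [Finset.compl_eq_univ_sdiff]
  rfl

lemma gk_unitary {a b : Fin L} (hab : a ≠ b) {g}
    (hg : g ∈ Matrix.unitaryGroup (Fin 2 × Fin 2) ℂ) :
    gk a b hab g ∈ Matrix.unitaryGroup _ ℂ := by
  have h1 := (Unitary.mem_iff.1 hg).1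
  have h2 := (Unitary.mem_iff.1 hg).2
  rw [Matrix.star_eq_conjTranspose] at h1 h2
  constructor
  · rw [Matrix.star_eq_conjTranspose, gk, Matrix.conjTranspose_submatrix,
      Matrix.submatrix_mul_equiv, h1, Matrix.submatrix_one_equiv]
  · rw [Matrix.star_eq_conjTranspose, gk, Matrix.conjTranspose_submatrix,
      Matrix.submatrix_mul_equiv, h2, Matrix.submatrix_one_equiv]

lemma gateAt_unitary {a b : Fin L} (hab : a ≠ b) {g}
    (hg : g ∈ Matrix.unitaryGroup (Fin 2 × Fin 2) ℂ) :
    gateAt L a b g ∈ Matrix.unitaryGroup (QubitConf L) ℂ := by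
  rw [gateAt_eq_emb a b hab]
  exact emb_mem_unitary (gk_unitary hab hg)

/-- the left half `[0, m)` of the chain -/
def Pm (L m : ℕ) : Finset (Fin L) := Finset.univ.filter (fun i => (i : ℕ) < m)

lemma dl_self (S : Finset (Fin L)) (f g : QubitConf L) :
    dl S f g = if res S f = res S g then 1 else 0 := by
  rw [dl_boole]
  congr 1
  simp only [eq_iff_iff]
  constructor
  · intro h; funext i; exact h i i.2
  · intro h i hi; exact congrFun h ⟨i, hi⟩

/-- `M` factorizes as a tensor product across the cut at `m` -/
def Fact (m : ℕ) (M : QubitOp L) : Prop :=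
  ∃ (ML : Matrix ({i : Fin L // i ∈ Pm L m} → Fin 2) ({i : Fin L // i ∈ Pm L m} → Fin 2) ℂ)
    (MR : Matrix ({i : Fin L // i ∉ Pm L m} → Fin 2) ({i : Fin L // i ∉ Pm L m} → Fin 2) ℂ),
    M = fun f g => ML (res (Pm L m) f) (res (Pm L m) g) * MR (resC (Pm L m) f) (resC (Pm L m) g)

lemma Fact_one (m : ℕ) : Fact m (1 : QubitOp L) := by
  refine ⟨1, 1, ?_⟩
  funext f g
  rw [Matrix.one_apply, Matrix.one_apply, Matrix.one_apply]
  by_cases h : f = g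
  · simp [h]
  · have : ¬(res (Pm L m) f = res (Pm L m) g ∧ resC (Pm L m) f = resC (Pm L m) g) := by
      intro ⟨h1, h2⟩
      exact h (by rw [← glue_res (Pm L m) f, h1, h2, glue_res])
    rcases not_and_or.1 this with h1 | h2
    · simp [h1, h]
    · simp [h2, h]

lemma Fact_mul {m : ℕ} {M N : QubitOp L} (hM : Fact m M) (hN : Fact m N) :
    Fact m (M * N) := by
  obtain ⟨ML, MR, hM⟩ := hM
  obtain ⟨NL, NR, hN⟩ := hN
  refine ⟨ML * NL, MR * NR, ?_⟩
  funext f g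
  rw [Matrix.mul_apply, hM, hN]
  simp only
  rw [sum_glue (Pm L m)]
  simp only [res_glue, resC_glue]
  rw [Matrix.mul_apply, Matrix.mul_apply, Finset.sum_mul_sum]
  apply Finset.sum_congr rfl
  intro u _
  apply Finset.sum_congr rfl
  intro w _
  ring

lemma Fact_star {m : ℕ} {M : QubitOp L} (hM : Fact m M) : Fact m Mᴴ := by
  obtain ⟨ML, MR, hM⟩ := hM
  refine ⟨MLᴴ, MRᴴ, ?_⟩
  funext f g
  rw [Matrix.conjTranspose_apply, hM]
  simp only [Matrix.conjTranspose_apply, star_mul']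

lemma Fact_emb_left {m : ℕ} {S : Finset (Fin L)} (hS : S ⊆ Pm L m) (k) :
    Fact m (emb S k) := by
  rw [emb_mono hS]
  refine ⟨liftK S (Pm L m) hS k, 1, ?_⟩
  funext f g
  rw [emb, dl_compl, Matrix.one_apply]

lemma Fact_emb_right {m : ℕ} {S : Finset (Fin L)} (hS : S ⊆ (Pm L m)ᶜ) (k) :
    Fact m (emb S k) := by
  rw [emb_mono hS]
  refine ⟨1, fun u v => liftK S (Pm L m)ᶜ hS k
      (fun i => u ⟨i.1, Finset.mem_compl.1 i.2⟩) (fun i => v ⟨i.1, Finset.mem_compl.1 i.2⟩), ?_⟩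
  funext f g
  rw [emb, compl_compl, dl_self, Matrix.one_apply]
  beta_reduce
  have : (fun i : {i : Fin L // i ∈ (Pm L m)ᶜ} => resC (Pm L m) f ⟨i.1, Finset.mem_compl.1 i.2⟩)
      = res (Pm L m)ᶜ f := rfl
  rw [this]
  have : (fun i : {i : Fin L // i ∈ (Pm L m)ᶜ} => resC (Pm L m) g ⟨i.1, Finset.mem_compl.1 i.2⟩)
      = res (Pm L m)ᶜ g := rfl
  rw [this]
  ring

lemma reducedDM_eq_glue (X : Finset (Fin L)) (ρ : QubitOp L) (f g) :
    reducedDM L X ρ f g = ∑ h, ρ (glue X f h) (glue X g h) := rfl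

lemma reducedDM_emb_mul (X : Finset (Fin L)) (c) (N : QubitOp L) :
    reducedDM L X (emb X c * N) = c * reducedDM L X N := by
  funext f g
  rw [Matrix.mul_apply, reducedDM_eq_glue]
  have step : ∀ h, (emb X c * N) (glue X f h) (glue X g h)
      = ∑ u, c f u * N (glue X u h) (glue X g h) := by
    intro h
    rw [Matrix.mul_apply, sum_glue X]
    simp only [emb, res_glue, resC_glue, dl_compl]
    apply Finset.sum_congr rfl
    intro u _
    rw [Fintype.sum_eq_single h ?_]
    · simp
    · intro w hw
      rw [if_neg (Ne.symm hw), mul_zero, zero_mul]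
  simp only [step]
  rw [Finset.sum_comm]
  apply Finset.sum_congr rfl
  intro u _
  rw [reducedDM_eq_glue, Finset.mul_sum]

lemma reducedDM_star (X : Finset (Fin L)) (ρ : QubitOp L) :
    (reducedDM L X ρ)ᴴ = reducedDM L X ρᴴ := by
  funext f g
  rw [Matrix.conjTranspose_apply, reducedDM_eq_glue, reducedDM_eq_glue, star_sum]
  apply Finset.sum_congr rfl
  intro h _
  rw [Matrix.conjTranspose_apply]

lemma reducedDM_mul_emb (X : Finset (Fin L)) (c) (N : QubitOp L) :
    reducedDM L X (N * emb X c) = reducedDM L X N * c := by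
  have h1 : reducedDM L X (N * emb X c) = (reducedDM L X (N * emb X c)ᴴ)ᴴ := by
    rw [reducedDM_star, Matrix.conjTranspose_conjTranspose]
  rw [h1, Matrix.conjTranspose_mul, emb_star, reducedDM_emb_mul, Matrix.conjTranspose_mul,
    Matrix.conjTranspose_conjTranspose, reducedDM_star, Matrix.conjTranspose_conjTranspose]

lemma conj_pow_unitary {ι : Type*} [Fintype ι] [DecidableEq ι]
    {c : Matrix ι ι ℂ} (hc : c ∈ Matrix.unitaryGroup ι ℂ) (R : Matrix ι ι ℂ) (n : ℕ) :
    Matrix.trace ((c * R * cᴴ) ^ n) = Matrix.trace (R ^ n) := by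
  have hsc : cᴴ * c = 1 := by
    have := (Unitary.mem_iff.1 hc).1
    rwa [Matrix.star_eq_conjTranspose] at this
  have hcs : c * cᴴ = 1 := by
    have := (Unitary.mem_iff.1 hc).2
    rwa [Matrix.star_eq_conjTranspose] at this
  have key : ∀ n, (c * R * cᴴ) ^ n = c * R ^ n * cᴴ := by
    intro n
    induction n with
    | zero => rw [pow_zero, pow_zero, mul_one, hcs]
    | succ n ih =>
        rw [pow_succ, ih, pow_succ]
        calc c * R ^ n * cᴴ * (c * R * cᴴ) = c * R ^ n * (cᴴ * c) * R * cᴴ := by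
              noncomm_ring
          _ = c * (R ^ n * R) * cᴴ := by rw [hsc]; noncomm_ring
  rw [key, Matrix.trace_mul_cycle, hsc, Matrix.one_mul]

open Kronecker in
lemma kron_pow {α β : Type*} [Fintype α] [Fintype β] [DecidableEq α] [DecidableEq β]
    (A : Matrix α α ℂ) (B : Matrix β β ℂ) (n : ℕ) :
    (A ⊗ₖ B) ^ n = (A ^ n) ⊗ₖ (B ^ n) := by
  induction n with
  | zero => simp [Matrix.one_kronecker_one]
  | succ n ih => rw [pow_succ, ih, pow_succ, pow_succ, Matrix.mul_kronecker_mul]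

lemma trace_pow_submatrix {α β : Type*} [Fintype α] [Fintype β] [DecidableEq α] [DecidableEq β]
    (e : α ≃ β) (K : Matrix β β ℂ) (n : ℕ) :
    Matrix.trace ((K.submatrix e e) ^ n) = Matrix.trace (K ^ n) := by
  have hpow : ∀ n, 0 < n → (K.submatrix e e) ^ n = (K ^ n).submatrix e e := by
    intro n hn
    induction n with
    | zero => omega
    | succ n ih =>
        rcases Nat.eq_zero_or_pos n with h0 | hpos
        · subst h0; simp
        · rw [pow_succ, ih hpos, pow_succ, Matrix.submatrix_mul_equiv]
  rcases Nat.eq_zero_or_pos n with h0 | hpos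
  · subst h0
    simp only [pow_zero]
    rw [Matrix.trace, Matrix.trace]
    exact Fintype.sum_equiv e _ _ (fun a => by simp [Matrix.one_apply])
  · rw [hpow n hpos, Matrix.trace, Matrix.trace]
    exact Fintype.sum_equiv e _ _ (fun a => by simp)

variable {L : ℕ}

/-- assemble a left-configuration from values on `Y` and values off `Y` -/
def asmL (m : ℕ) (Y : Finset (Fin L)) (u : {i : Fin L // i ∈ Y} → Fin 2)
    (h : {j : {i : Fin L // i ∈ Pm L m} // j.1 ∉ Y} → Fin 2) :
    {i : Fin L // i ∈ Pm L m} → Fin 2 :=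
  fun j => if hj : j.1 ∈ Y then u ⟨j.1, hj⟩ else h ⟨j, hj⟩

def asmR (m : ℕ) (Z : Finset (Fin L)) (u : {i : Fin L // i ∈ Z} → Fin 2)
    (h : {j : {i : Fin L // i ∉ Pm L m} // j.1 ∉ Z} → Fin 2) :
    {i : Fin L // i ∉ Pm L m} → Fin 2 :=
  fun j => if hj : j.1 ∈ Z then u ⟨j.1, hj⟩ else h ⟨j, hj⟩

/-- partial trace of the left factor onto `Y` -/
noncomputable def redL (m : ℕ) (Y : Finset (Fin L))
    (ML : Matrix ({i : Fin L // i ∈ Pm L m} → Fin 2) ({i : Fin L // i ∈ Pm L m} → Fin 2) ℂ) :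
    Matrix ({i : Fin L // i ∈ Y} → Fin 2) ({i : Fin L // i ∈ Y} → Fin 2) ℂ :=
  fun u v => ∑ h, ML (asmL m Y u h) (asmL m Y v h)

noncomputable def redR (m : ℕ) (Z : Finset (Fin L))
    (MR : Matrix ({i : Fin L // i ∉ Pm L m} → Fin 2) ({i : Fin L // i ∉ Pm L m} → Fin 2) ℂ) :
    Matrix ({i : Fin L // i ∈ Z} → Fin 2) ({i : Fin L // i ∈ Z} → Fin 2) ℂ :=
  fun u v => ∑ h, MR (asmR m Z u h) (asmR m Z v h)

section master
variable (m : ℕ) (X : Finset (Fin L))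

/-- split a configuration on `X` into its parts left and right of the cut -/
def splitX : ({i : Fin L // i ∈ X} → Fin 2) ≃
    ({i : Fin L // i ∈ X ∩ Pm L m} → Fin 2) × ({i : Fin L // i ∈ X \ Pm L m} → Fin 2) where
  toFun u := (fun j => u ⟨j.1, (Finset.mem_inter.1 j.2).1⟩,
              fun j => u ⟨j.1, (Finset.mem_sdiff.1 j.2).1⟩)
  invFun p := fun i => if hi : i.1 ∈ Pm L m
    then p.1 ⟨i.1, Finset.mem_inter.2 ⟨i.2, hi⟩⟩
    else p.2 ⟨i.1, Finset.mem_sdiff.2 ⟨i.2, hi⟩⟩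
  left_inv u := by
    funext i
    by_cases hi : i.1 ∈ Pm L m <;> simp [hi]
  right_inv p := by
    ext j
    · have h2 := (Finset.mem_inter.1 j.2).2
      simp [h2]
    · have h2 := (Finset.mem_sdiff.1 j.2).2
      simp [h2]

/-- split a configuration on `Xᶜ` into its parts left and right of the cut -/
def splitH : ({i : Fin L // i ∉ X} → Fin 2) ≃
    ({j : {i : Fin L // i ∈ Pm L m} // j.1 ∉ X ∩ Pm L m} → Fin 2) ×
    ({j : {i : Fin L // i ∉ Pm L m} // j.1 ∉ X \ Pm L m} → Fin 2) where
  toFun h := (fun j => h ⟨j.1.1, fun hX => j.2 (Finset.mem_inter.2 ⟨hX, j.1.2⟩)⟩,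
              fun j => h ⟨j.1.1, fun hX => j.2 (Finset.mem_sdiff.2 ⟨hX, j.1.2⟩)⟩)
  invFun p := fun i => if hi : i.1 ∈ Pm L m
    then p.1 ⟨⟨i.1, hi⟩, fun hY => i.2 (Finset.mem_inter.1 hY).1⟩
    else p.2 ⟨⟨i.1, hi⟩, fun hZ => i.2 (Finset.mem_sdiff.1 hZ).1⟩
  left_inv h := by
    funext i
    by_cases hi : i.1 ∈ Pm L m <;> simp [hi]
  right_inv p := by
    ext j
    · have h2 := j.1.2
      simp [h2]
    · have h2 := j.1.2
      simp [h2]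

lemma master_entry (ML MR) (f g : {i : Fin L // i ∈ X} → Fin 2) :
    reducedDM L X (fun f g => ML (res (Pm L m) f) (res (Pm L m) g)
        * MR (resC (Pm L m) f) (resC (Pm L m) g)) f g
      = redL m (X ∩ Pm L m) ML ((splitX m X) f).1 ((splitX m X) g).1
        * redR m (X \ Pm L m) MR ((splitX m X) f).2 ((splitX m X) g).2 := by
  refine (reducedDM_eq_glue X _ f g).trans ?_
  have G1 : ∀ (f : {i : Fin L // i ∈ X} → Fin 2) h,
      res (Pm L m) (glue X f h) = asmL m (X ∩ Pm L m) ((splitX m X) f).1 ((splitH m X) h).1 := by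
    intro f h
    funext j
    by_cases hX : j.1 ∈ X
    · have hY : j.1 ∈ X ∩ Pm L m := Finset.mem_inter.2 ⟨hX, j.2⟩
      simp [res, glue, asmL, splitX, hX, hY]
    · have hY : j.1 ∉ X ∩ Pm L m := fun hc => hX (Finset.mem_inter.1 hc).1
      simp [res, glue, asmL, splitH, hX, hY]
  have G2 : ∀ (f : {i : Fin L // i ∈ X} → Fin 2) h,
      resC (Pm L m) (glue X f h) = asmR m (X \ Pm L m) ((splitX m X) f).2 ((splitH m X) h).2 := by
    intro f h
    funext j
    by_cases hX : j.1 ∈ X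
    · have hZ : j.1 ∈ X \ Pm L m := Finset.mem_sdiff.2 ⟨hX, j.2⟩
      simp [resC, glue, asmR, splitX, hX, hZ]
    · have hZ : j.1 ∉ X \ Pm L m := fun hc => hX (Finset.mem_sdiff.1 hc).1
      simp [resC, glue, asmR, splitH, hX, hZ]
  simp only [G1, G2]
  rw [redL, redR, Finset.sum_mul_sum]
  rw [← Fintype.sum_prod_type (f := fun p => ML (asmL m (X ∩ Pm L m) ((splitX m X) f).1 p.1)
        (asmL m (X ∩ Pm L m) ((splitX m X) g).1 p.1)
      * MR (asmR m (X \ Pm L m) ((splitX m X) f).2 p.2)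
        (asmR m (X \ Pm L m) ((splitX m X) g).2 p.2))]
  exact Fintype.sum_bijective (splitH m X) (splitH m X).bijective _ _ (fun h => rfl)

open Kronecker in
lemma master (ML MR) (n : ℕ) :
    Matrix.trace ((reducedDM L X (fun f g => ML (res (Pm L m) f) (res (Pm L m) g)
        * MR (resC (Pm L m) f) (resC (Pm L m) g))) ^ n)
      = Matrix.trace ((redL m (X ∩ Pm L m) ML) ^ n)
        * Matrix.trace ((redR m (X \ Pm L m) MR) ^ n) := by
  have hsub : reducedDM L X (fun f g => ML (res (Pm L m) f) (res (Pm L m) g)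
        * MR (resC (Pm L m) f) (resC (Pm L m) g))
      = ((redL m (X ∩ Pm L m) ML) ⊗ₖ (redR m (X \ Pm L m) MR)).submatrix
          (splitX m X) (splitX m X) := by
    funext f g
    rw [master_entry]
    rfl
  rw [hsub, trace_pow_submatrix, kron_pow, Matrix.trace_kronecker]

end master

section lists
variable {M : Type*} [Monoid M] {ι : Type*}

lemma prod_filterMap_getD (l : List ι) (F : ι → Option M) :
    (l.filterMap F).prod = (l.map (fun j => (F j).getD 1)).prod := by
  induction l with
  | nil => rfl
  | cons hd tl ih =>
      cases hF : F hd <;> simp [List.filterMap_cons, hF, ih]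

lemma prod_map_mul_of_commute (l : List ι) (A B : ι → M)
    (hc : l.Pairwise (fun i j => Commute (B i) (A j))) :
    (l.map (fun j => A j * B j)).prod = (l.map A).prod * (l.map B).prod := by
  induction l with
  | nil => simp
  | cons hd tl ih =>
      rw [List.pairwise_cons] at hc
      have hcomm : Commute (B hd) ((tl.map A).prod) := by
        apply Commute.list_prod_right
        intro x hx
        obtain ⟨j, hj, rfl⟩ := List.mem_map.1 hx
        exact hc.1 j hj
      simp only [List.map_cons, List.prod_cons]
      rw [ih hc.2, mul_assoc, ← mul_assoc (B hd), hcomm.eq, mul_assoc, mul_assoc]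

lemma emb_list_prod {L : ℕ} (S : Finset (Fin L)) (l : List (QubitOp L))
    (h : ∀ M ∈ l, ∃ k, M = emb S k) : ∃ k, l.prod = emb S k := by
  induction l with
  | nil => exact ⟨1, (emb_one S).symm⟩
  | cons hd tl ih =>
      obtain ⟨k1, hk1⟩ := h hd (List.mem_cons_self)
      obtain ⟨k2, hk2⟩ := ih (fun M hM => h M (List.mem_cons_of_mem hd hM))
      exact ⟨k1 * k2, by rw [List.prod_cons, hk1, hk2, emb_mul]⟩

lemma Fact_list_prod {L m : ℕ} (l : List (QubitOp L))
    (h : ∀ M ∈ l, Fact m M) : Fact m l.prod := by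
  induction l with
  | nil => exact Fact_one m
  | cons hd tl ih =>
      rw [List.prod_cons]
      exact Fact_mul (h hd (List.mem_cons_self))
        (ih (fun M hM => h M (List.mem_cons_of_mem hd hM)))

end lists

/-- the light cone of the cut at `m`, after `T` layers -/
def Zone (L m T : ℕ) : Finset (Fin L) :=
  Finset.univ.filter (fun i => m + 1 ≤ (i : ℕ) + T ∧ (i : ℕ) + 2 ≤ m + T)

lemma Zone_mono {L m : ℕ} {T T' : ℕ} (h : T ≤ T') : Zone L m T ⊆ Zone L m T' := by
  intro i hi
  simp only [Zone, Finset.mem_filter, Finset.mem_univ, true_and] at hi ⊢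
  omega

/-- the gates of a layer, as a total function -/
noncomputable def GDgate (L p : ℕ) (g : ℕ → Matrix (Fin 2 × Fin 2) (Fin 2 × Fin 2) ℂ)
    (j : ℕ) : QubitOp L :=
  if h : 2 * j + p + 1 < L then gateAt L ⟨2 * j + p, by omega⟩ ⟨2 * j + p + 1, h⟩ (g j) else 1

/-- gate `j` of layer `s` is in the light cone of the cut at `m` -/
def INP (m s p j : ℕ) : Prop := m ≤ 2 * j + p + s ∧ 2 * j + p + 2 ≤ m + s

instance (m s p j : ℕ) : Decidable (INP m s p j) := by unfold INP; infer_instance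

noncomputable def GIn (L m s p : ℕ) (g : ℕ → Matrix (Fin 2 × Fin 2) (Fin 2 × Fin 2) ℂ)
    (j : ℕ) : QubitOp L := if INP m s p j then GDgate L p g j else 1

noncomputable def GOut (L m s p : ℕ) (g : ℕ → Matrix (Fin 2 × Fin 2) (Fin 2 × Fin 2) ℂ)
    (j : ℕ) : QubitOp L := if INP m s p j then 1 else GDgate L p g j

lemma layer_decomp {L ℓ b c m : ℕ} (s : ℕ) (hs : 1 ≤ s) (hsl : s ≤ ℓ) (hm2 : m % 2 = 0)
    (hbm : b + ℓ ≤ m + 1) (hmc : m + ℓ ≤ c + 1)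
    {V : QubitOp L} (hV : IsBrickLayer L ((s + 1) % 2) V) :
    ∃ (I : QubitOp L) (olist : List (QubitOp L)),
      V = I * olist.prod ∧
      I ∈ Matrix.unitaryGroup (QubitConf L) ℂ ∧
      (∃ kI, I = emb (Zone L m s) kI) ∧
      (∀ O ∈ olist, Fact m O ∧ ∃ S kO, O = emb S kO ∧ Disjoint S (Zone L m (s - 1))) := by
  obtain ⟨g, hg, hVeq⟩ := hV
  set p := (s + 1) % 2 with hp
  have hVGD : V = ((List.range L).map (GDgate L p g)).prod := by
    rw [hVeq, prod_filterMap_getD]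
    congr 1
    apply List.map_congr_left
    intro j _
    by_cases h : 2 * j + p + 1 < L <;> simp [GDgate, h]
  have hsplit : V = ((List.range L).map (GIn L m s p g)).prod
      * ((List.range L).map (GOut L m s p g)).prod := by
    rw [hVGD]
    have : (List.range L).map (GDgate L p g)
        = (List.range L).map (fun j => GIn L m s p g j * GOut L m s p g j) :=
      List.map_congr_left (fun j _ => by
        by_cases h : INP m s p j <;> simp [GIn, GOut, h])
    rw [this]
    apply prod_map_mul_of_commute
    apply (List.pairwise_lt_range : List.Pairwise (· < ·) (List.range L)).imp
    intro i j hij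
    by_cases hIi : INP m s p i
    · simp only [GOut, if_pos hIi]; exact Commute.one_left _
    · by_cases hIj : INP m s p j
      · simp only [GOut, GIn, if_neg hIi, if_pos hIj]
        by_cases hLi : 2 * i + p + 1 < L
        · by_cases hLj : 2 * j + p + 1 < L
          · simp only [GDgate, dif_pos hLi, dif_pos hLj]
            rw [gateAt_eq_emb _ _ (by simp [Fin.ext_iff] <;> omega),
              gateAt_eq_emb _ _ (by simp [Fin.ext_iff] <;> omega)]
            apply emb_comm_disjoint
            rw [Finset.disjoint_left]
            intro x hx hx'
            simp only [Finset.mem_insert, Finset.mem_singleton, Fin.ext_iff] at hx hx'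
            omega
          · simp only [GDgate, dif_neg hLj]; exact Commute.one_right _
        · simp only [GDgate, dif_neg hLi]; exact Commute.one_left _
      · simp only [GIn, if_neg hIj]; exact Commute.one_right _
  refine ⟨((List.range L).map (GIn L m s p g)).prod, (List.range L).map (GOut L m s p g),
    hsplit, ?_, ?_, ?_⟩
  · -- unitarity
    apply Submonoid.list_prod_mem
    intro x hx
    obtain ⟨j, _, rfl⟩ := List.mem_map.1 hx
    by_cases h : INP m s p j
    · simp only [GIn, if_pos h]
      by_cases hLj : 2 * j + p + 1 < L
      · simp only [GDgate, dif_pos hLj]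
        exact gateAt_unitary (by simp [Fin.ext_iff]) (hg j)
      · simp only [GDgate, dif_neg hLj]; exact one_mem _
    · simp only [GIn, if_neg h]; exact one_mem _
  · -- localized in Zone s
    apply emb_list_prod
    intro x hx
    obtain ⟨j, _, rfl⟩ := List.mem_map.1 hx
    by_cases h : INP m s p j
    · simp only [GIn, if_pos h]
      by_cases hLj : 2 * j + p + 1 < L
      · simp only [GDgate, dif_pos hLj]
        rw [gateAt_eq_emb _ _ (by simp [Fin.ext_iff])]
        have hsub : ({⟨2 * j + p, by omega⟩, ⟨2 * j + p + 1, hLj⟩} : Finset (Fin L))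
            ⊆ Zone L m s := by
          have hpar : (2 * j + p + s) % 2 = 1 := by omega
          obtain ⟨h1, h2⟩ := h
          intro x hx
          simp only [Finset.mem_insert, Finset.mem_singleton] at hx
          simp only [Zone, Finset.mem_filter, Finset.mem_univ, true_and]
          rcases hx with rfl | rfl <;> simp only [Fin.val_mk] <;> omega
        exact ⟨_, emb_mono hsub _⟩
      · simp only [GDgate, dif_neg hLj]; exact ⟨1, (emb_one _).symm⟩
    · simp only [GIn, if_neg h]; exact ⟨1, (emb_one _).symm⟩
  · -- out gates
    intro O hO
    obtain ⟨j, _, rfl⟩ := List.mem_map.1 hO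
    by_cases h : INP m s p j
    · simp only [GOut, if_pos h]
      exact ⟨Fact_one m, ∅, 1, (emb_one ∅).symm, Finset.disjoint_empty_left _⟩
    · simp only [GOut, if_neg h]
      by_cases hLj : 2 * j + p + 1 < L
      · simp only [GDgate, dif_pos hLj]
        rw [gateAt_eq_emb _ _ (by simp [Fin.ext_iff])]
        have hside : 2 * j + p + s < m ∨ m + s < 2 * j + p + 2 := by
          rw [INP, not_and_or] at h
          omega
        refine ⟨?_, _, _, rfl, ?_⟩
        · rcases hside with hside | hside
          · apply Fact_emb_left
            intro x hx
            simp only [Finset.mem_insert, Finset.mem_singleton] at hx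
            simp only [Pm, Finset.mem_filter, Finset.mem_univ, true_and]
            rcases hx with rfl | rfl <;> simp only [Fin.val_mk] <;> omega
          · apply Fact_emb_right
            intro x hx
            simp only [Finset.mem_insert, Finset.mem_singleton] at hx
            simp only [Finset.mem_compl, Pm, Finset.mem_filter, Finset.mem_univ, true_and]
            rcases hx with rfl | rfl <;> simp only [Fin.val_mk] <;> omega
        · rw [Finset.disjoint_left]
          intro x hx hx'
          simp only [Finset.mem_insert, Finset.mem_singleton] at hx
          simp only [Zone, Finset.mem_filter, Finset.mem_univ, true_and] at hx'
          rcases hx with rfl | rfl <;> simp only [Fin.val_mk] at hx' <;> omega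
      · simp only [GDgate, dif_neg hLj]
        exact ⟨Fact_one m, ∅, 1, (emb_one ∅).symm, Finset.disjoint_empty_left _⟩

lemma circuit_decomp {L ℓ b c m : ℕ} (hm2 : 1 ≤ ℓ → m % 2 = 0)
    (hbm : b + ℓ ≤ m + 1) (hmc : m + ℓ ≤ c + 1)
    (V : ℕ → QubitOp L) (hV : ∀ t, 1 ≤ t → t ≤ ℓ → IsBrickLayer L ((t + 1) % 2) (V t)) :
    ∀ T, T ≤ ℓ → ∃ (C W : QubitOp L),
      ((List.range T).map (fun t => V (T - t))).prod = C * W ∧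
      C ∈ Matrix.unitaryGroup (QubitConf L) ℂ ∧
      (∃ k, C = emb (Zone L m T) k) ∧ Fact m W := by
  intro T
  induction T with
  | zero =>
      intro _
      exact ⟨1, 1, by simp, one_mem _, ⟨1, (emb_one _).symm⟩, Fact_one m⟩
  | succ T ih =>
      intro hT
      obtain ⟨C, W, hCW, hCu, ⟨k, hCk⟩, hWf⟩ := ih (by omega)
      obtain ⟨I, olist, hVI, hIu, ⟨kI, hkI⟩, hO⟩ :=
        layer_decomp (L := L) (ℓ := ℓ) (b := b) (c := c) (m := m) (T + 1)
          (by omega) hT (hm2 (by omega)) hbm hmc (hV (T + 1) (by omega) hT)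
      have hlist : ((List.range (T + 1)).map (fun t => V (T + 1 - t))).prod
          = V (T + 1) * ((List.range T).map (fun t => V (T - t))).prod := by
        rw [List.range_succ_eq_map, List.map_cons, List.prod_cons, Nat.sub_zero, List.map_map]
        congr 1
        exact congrArg List.prod (List.map_congr_left
          (fun t _ => by simp [Function.comp, Nat.succ_sub_succ]))
      have hcomm : Commute olist.prod C := by
        apply Commute.list_prod_left
        intro O hOmem
        obtain ⟨_, S, kO, hOe, hdisj⟩ := hO O hOmem
        rw [hOe, hCk]
        have : Zone L m T ⊆ Zone L m (T + 1 - 1) := by simp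
        exact emb_comm_disjoint (Finset.disjoint_right.2
          (fun x hx hxS => Finset.disjoint_left.1 hdisj hxS (by simpa using hx))) kO k
      refine ⟨I * C, olist.prod * W, ?_, mul_mem hIu hCu, ?_, ?_⟩
      · rw [hlist, hCW, hVI]
        calc I * olist.prod * (C * W) = I * (olist.prod * C) * W := by noncomm_ring
          _ = I * (C * olist.prod) * W := by rw [hcomm.eq]
          _ = I * C * (olist.prod * W) := by noncomm_ring
      · refine ⟨kI * liftK _ _ (Zone_mono (by omega)) k, ?_⟩
        rw [hkI, hCk, emb_mono (Zone_mono (L := L) (m := m) (by omega : T ≤ T + 1)), emb_mul]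
      · exact Fact_mul (Fact_list_prod olist (fun O hOmem => (hO O hOmem).1)) hWf

lemma Fact_prodState {L : ℕ} (m : ℕ) (σ : Fin L → Matrix (Fin 2) (Fin 2) ℂ) :
    Fact m (prodState L σ) := by
  refine ⟨fun u v => ∏ j : {i : Fin L // i ∈ Pm L m}, σ j.1 (u j) (v j),
    fun u v => ∏ j : {i : Fin L // i ∉ Pm L m}, σ j.1 (u j) (v j), ?_⟩
  funext f g
  rw [prodState]
  rw [← Fintype.prod_subtype_mul_prod_subtype (· ∈ Pm L m) (fun i => σ i (f i) (g i))]
  beta_reduce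
  congr 1 <;> exact Finset.prod_congr (by ext x; simp) (fun j _ => rfl)

lemma Zone_subset_B {L ℓ b c m : ℕ} (hbm : b + ℓ ≤ m + 1) (hmc : m + ℓ ≤ c + 1) :
    Zone L m ℓ ⊆ qInterval L b c := by
  intro i hi
  simp only [Zone, Finset.mem_filter, Finset.mem_univ, true_and] at hi
  simp only [qInterval, Finset.mem_filter, Finset.mem_univ, true_and]
  omega

end FDQC

open FDQC

/-- For an FDQC state `ρ` of depth `ℓ` and consecutive disjoint intervals
`A = [a,b)`, `B = [b,c)`, `C = [c,d)` with `|B| ≥ 2ℓ - 1`, for every `n ≥ 1`: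
`Tr((ρ_{A∪B∪C})ⁿ) · Tr((ρ_B)ⁿ) = Tr((ρ_{A∪B})ⁿ) · Tr((ρ_{B∪C})ⁿ)`. -/
theorem fdqc_moment_factorization
    (L ℓ : ℕ) (ρ : QubitOp L) (hρ : IsFDQCState L ℓ ρ)
    (a b c d : ℕ) (hab : a ≤ b) (hbc : b ≤ c) (hcd : c ≤ d) (hdL : d ≤ L)
    (hB : 2 * ℓ - 1 ≤ c - b)
    (n : ℕ) (hn : 1 ≤ n) :
    ((reducedDM L (qInterval L a b ∪ qInterval L b c ∪ qInterval L c d) ρ) ^ n).trace *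
        ((reducedDM L (qInterval L b c) ρ) ^ n).trace =
      ((reducedDM L (qInterval L a b ∪ qInterval L b c) ρ) ^ n).trace *
        ((reducedDM L (qInterval L b c ∪ qInterval L c d) ρ) ^ n).trace := by
  obtain ⟨U, σ, ⟨V, hV, hUeq⟩, hσ, hρeq⟩ := hρ
  obtain ⟨m, hm2, hbm, hmc, hbm', hmc'⟩ :
      ∃ m, (1 ≤ ℓ → m % 2 = 0) ∧ b + ℓ ≤ m + 1 ∧ m + ℓ ≤ c + 1 ∧ b ≤ m ∧ m ≤ c := by
    rcases Nat.eq_zero_or_pos ℓ with h0 | hpos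
    · exact ⟨b, fun h => by omega, by omega, by omega, le_refl b, hbc⟩
    · by_cases hpar : (b + ℓ - 1) % 2 = 0
      · exact ⟨b + ℓ - 1, fun _ => hpar, by omega, by omega, by omega, by omega⟩
      · exact ⟨b + ℓ, fun _ => by omega, by omega, by omega, by omega, by omega⟩
  obtain ⟨C, W, hCW, hCu, ⟨k, hCk⟩, hWf⟩ :=
    circuit_decomp (b := b) (c := c) hm2 hbm hmc V hV ℓ le_rfl
  rw [← hUeq] at hCW
  set τ : QubitOp L := W * prodState L σ * Wᴴ with hτ
  have hτf : Fact m τ := Fact_mul (Fact_mul hWf (Fact_prodState m σ)) (Fact_star hWf)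
  obtain ⟨ML, MR, hMLMR⟩ := hτf
  have hρC : ρ = C * τ * Cᴴ := by
    rw [hρeq, hCW, Matrix.conjTranspose_mul, hτ]
    noncomm_ring
  have key : ∀ X : Finset (Fin L), qInterval L b c ⊆ X →
      ((reducedDM L X ρ) ^ n).trace
        = ((redL m (X ∩ Pm L m) ML) ^ n).trace * ((redR m (X \ Pm L m) MR) ^ n).trace := by
    intro X hBX
    have hZX : Zone L m ℓ ⊆ X := (Zone_subset_B hbm hmc).trans hBX
    have hCX : C = emb X (liftK _ _ hZX k) := by rw [hCk, emb_mono hZX]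
    have hcXu : liftK _ _ hZX k ∈ Matrix.unitaryGroup _ ℂ := unitary_of_emb (hCX ▸ hCu)
    have hred : reducedDM L X ρ
        = liftK _ _ hZX k * reducedDM L X τ * (liftK _ _ hZX k)ᴴ := by
      rw [hρC, hCX, Matrix.mul_assoc, emb_star, reducedDM_emb_mul, reducedDM_mul_emb,
        ← Matrix.mul_assoc]
    rw [hred, conj_pow_unitary hcXu, hMLMR]
    exact master m X ML MR n
  have hsub1 : qInterval L b c ⊆ qInterval L a b ∪ qInterval L b c ∪ qInterval L c d :=
    Finset.Subset.trans Finset.subset_union_right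
      (Finset.subset_union_left (s₂ := qInterval L c d))
  have hsub3 : qInterval L b c ⊆ qInterval L a b ∪ qInterval L b c :=
    Finset.subset_union_right
  have hsub4 : qInterval L b c ⊆ qInterval L b c ∪ qInterval L c d :=
    Finset.subset_union_left
  rw [key _ hsub1, key _ (Finset.Subset.refl _), key _ hsub3, key _ hsub4]
  have e1 : (qInterval L a b ∪ qInterval L b c ∪ qInterval L c d) ∩ Pm L m
      = qInterval L a m := by
    ext i
    simp only [qInterval, Pm, Finset.mem_inter, Finset.mem_union, Finset.mem_filter,
      Finset.mem_univ, true_and]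
    omega
  have e2 : (qInterval L a b ∪ qInterval L b c ∪ qInterval L c d) \ Pm L m
      = qInterval L m d := by
    ext i
    simp only [qInterval, Pm, Finset.mem_sdiff, Finset.mem_union, Finset.mem_filter,
      Finset.mem_univ, true_and]
    omega
  have e3 : qInterval L b c ∩ Pm L m = qInterval L b m := by
    ext i
    simp only [qInterval, Pm, Finset.mem_inter, Finset.mem_filter, Finset.mem_univ, true_and]
    omega
  have e4 : qInterval L b c \ Pm L m = qInterval L m c := by
    ext i
    simp only [qInterval, Pm, Finset.mem_sdiff, Finset.mem_filter, Finset.mem_univ, true_and]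
    omega
  have e5 : (qInterval L a b ∪ qInterval L b c) ∩ Pm L m = qInterval L a m := by
    ext i
    simp only [qInterval, Pm, Finset.mem_inter, Finset.mem_union, Finset.mem_filter,
      Finset.mem_univ, true_and]
    omega
  have e6 : (qInterval L a b ∪ qInterval L b c) \ Pm L m = qInterval L m c := by
    ext i
    simp only [qInterval, Pm, Finset.mem_sdiff, Finset.mem_union, Finset.mem_filter,
      Finset.mem_univ, true_and]
    omega
  have e7 : (qInterval L b c ∪ qInterval L c d) ∩ Pm L m = qInterval L b m := by
    ext i
    simp only [qInterval, Pm, Finset.mem_inter, Finset.mem_union, Finset.mem_filter,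
      Finset.mem_univ, true_and]
    omega
  have e8 : (qInterval L b c ∪ qInterval L c d) \ Pm L m = qInterval L m d := by
    ext i
    simp only [qInterval, Pm, Finset.mem_sdiff, Finset.mem_union, Finset.mem_filter,
      Finset.mem_univ, true_and]
    omega
  rw [e1, e2, e3, e4, e5, e6, e7, e8]
  ring
end

section
/- Let k ≥ 2 and R ≥ 2 be integers, set L = Rk, let 0 < δ ≤ 1, and let M be a real number with M ≥ max{ 2^{8k}, L² · 2^{4k+10} / (k² δ²) }. Let ε_1, …, ε_{R−1}, η_2, …, η_{R−1} be mutually independent real-valued random variables such that for every x > 0 and every admissible j, Pr(|ε_j| ≥ x) ≤ 2^{4k+3}/(x² M) and Pr(|η_j| ≥ x) ≤ 2^{2k+3}/(x² M). Define the random variable Q = ( ∏_{j=1}^{R−1} (1 + ε_j) ) / ( ∏_{j=2}^{R−1} (1 + η_j) ). Then Pr( |Q − 1| ≥ δ ) ≤ 2^{4k+11} L³ / (δ² k³ M). -/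
open MeasureTheory ProbabilityTheory

lemma aux_qclose (m : ℕ) (δ : ℝ) (hδ0 : 0 < δ) (hδ1 : δ ≤ 1)
    (a b : ℕ → ℝ)
    (ha : ∀ j ∈ Finset.Icc 1 (m+1), |a j| ≤ δ / (8 * ((m:ℝ)+2)))
    (hb : ∀ j ∈ Finset.Icc 2 (m+1), |b j| ≤ δ / (8 * ((m:ℝ)+2))) :
    |(∏ j ∈ Finset.Icc 1 (m+1), (1 + a j)) /
      (∏ j ∈ Finset.Icc 2 (m+1), (1 + b j)) - 1| < δ := by
  have hm2 : (0:ℝ) < (m:ℝ) + 2 := by positivity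
  set t := δ / (8 * ((m:ℝ)+2)) with htdef
  set s := δ / 8 with hsdef
  have ht0 : 0 < t := by positivity
  have hs0 : 0 < s := by positivity
  have hs8 : s ≤ 1/8 := by rw [hsdef]; linarith
  have hts : ((m:ℝ)+2) * t = s := by
    rw [htdef, hsdef]; field_simp
  have hmn : (0:ℝ) ≤ (m:ℝ) := Nat.cast_nonneg m
  have ht1 : t ≤ 1/16 := by nlinarith
  have h1s : 0 < 1 - s := by linarith
  have hneg : (1:ℝ) + -t = 1 - t := by ring
  have hber1 : 1 - s ≤ (1-t)^(m+1) := by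
    have h0 := one_add_mul_le_pow (a := -t) (by linarith) (m+1)
    rw [hneg] at h0
    have h2 : ((m:ℝ)+1) * t ≤ s := by nlinarith
    push_cast at h0
    nlinarith
  have hber2 : 1 - s ≤ (1-t)^m := by
    have h0 := one_add_mul_le_pow (a := -t) (by linarith) m
    rw [hneg] at h0
    have h2 : (m:ℝ) * t ≤ s := by nlinarith
    nlinarith
  have hmul : ∀ n : ℕ, (1+t)^n * (1-t)^n ≤ 1 := by
    intro n
    rw [← mul_pow]
    apply pow_le_one₀ (by nlinarith) (by nlinarith)
  have hup1 : (1+t)^(m+1) * (1-s) ≤ 1 := by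
    have h1 := hmul (m+1)
    have hp : (0:ℝ) ≤ (1+t)^(m+1) := by positivity
    nlinarith
  have hup2 : (1+t)^m * (1-s) ≤ 1 := by
    have h1 := hmul m
    have hp : (0:ℝ) ≤ (1+t)^m := by positivity
    nlinarith
  set N := ∏ j ∈ Finset.Icc 1 (m+1), (1 + a j) with hN
  set D := ∏ j ∈ Finset.Icc 2 (m+1), (1 + b j) with hD
  have hc1 : ∏ _x ∈ Finset.Icc 1 (m+1), (1-t) = (1-t)^(m+1) := by
    rw [Finset.prod_const, Nat.card_Icc]; norm_num
  have hc1' : ∏ _x ∈ Finset.Icc 1 (m+1), (1+t) = (1+t)^(m+1) := by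
    rw [Finset.prod_const, Nat.card_Icc]; norm_num
  have hc2 : ∏ _x ∈ Finset.Icc 2 (m+1), (1-t) = (1-t)^m := by
    rw [Finset.prod_const]
    congr 1
    rw [Nat.card_Icc]
    omega
  have hc2' : ∏ _x ∈ Finset.Icc 2 (m+1), (1+t) = (1+t)^m := by
    rw [Finset.prod_const]
    congr 1
    rw [Nat.card_Icc]
    omega
  have hNlb : (1-t)^(m+1) ≤ N := by
    rw [← hc1]
    apply Finset.prod_le_prod
    · intro j _; linarith
    · intro j hj; have := (abs_le.mp (ha j hj)).1; linarith
  have hNub : N ≤ (1+t)^(m+1) := by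
    rw [← hc1']
    apply Finset.prod_le_prod
    · intro j hj; have := (abs_le.mp (ha j hj)).1; linarith
    · intro j hj; have := (abs_le.mp (ha j hj)).2; linarith
  have hDlb : (1-t)^m ≤ D := by
    rw [← hc2]
    apply Finset.prod_le_prod
    · intro j _; linarith
    · intro j hj; have := (abs_le.mp (hb j hj)).1; linarith
  have hDub : D ≤ (1+t)^m := by
    rw [← hc2']
    apply Finset.prod_le_prod
    · intro j hj; have := (abs_le.mp (hb j hj)).1; linarith
    · intro j hj; have := (abs_le.mp (hb j hj)).2; linarith
  try clear_value N D
  try clear hN hD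
  try clear_value N D
  try clear hN hD
  have hN1 : 1 - s ≤ N := le_trans hber1 hNlb
  have hN2 : N * (1 - s) ≤ 1 := le_trans (mul_le_mul_of_nonneg_right hNub (by linarith)) hup1
  have hD1 : 1 - s ≤ D := le_trans hber2 hDlb
  have hD2 : D * (1 - s) ≤ 1 := le_trans (mul_le_mul_of_nonneg_right hDub (by linarith)) hup2
  have hD0 : 0 < D := by linarith
  have hδs : δ = 8 * s := by rw [hsdef]; ring
  clear hNlb hNub hDlb hDub hber1 hber2 hup1 hup2 hmul hc1 hc1' hc2 hc2' ha hb
  clear_value t s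
  have hNle : N ≤ 1/(1-s) := by rw [le_div_iff₀ h1s]; exact hN2
  have hDle : D ≤ 1/(1-s) := by rw [le_div_iff₀ h1s]; exact hD2
  have key : 1/(1-s) < (1-s) + 8*s*(1-s) := by
    rw [div_lt_iff₀ h1s]
    nlinarith [mul_le_mul_of_nonneg_left hs8 hs0.le, mul_pos (mul_pos hs0 hs0) hs0]
  have hsD : 8*s*(1-s) ≤ 8*s*D :=
    mul_le_mul_of_nonneg_left hD1 (by positivity)
  have hQ : N / D - 1 = (N - D) / D := by field_simp
  rw [hQ, abs_div, abs_of_pos hD0, div_lt_iff₀ hD0, abs_lt, hδs]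
  constructor
  · linarith [key, hDle, hN1, hsD]
  · linarith [key, hNle, hD1, hsD]

/-- Tail bound for the ratio-of-products purity estimator built from
independent local relative errors with Chebyshev-type tails. -/
theorem purity_estimator_tail_bound
    {Ω : Type*} [MeasurableSpace Ω] (μ : Measure Ω) [IsProbabilityMeasure μ]
    (k R L : ℕ) (hk : 2 ≤ k) (hR : 2 ≤ R) (hL : L = R * k)
    (δ M : ℝ) (hδ0 : 0 < δ) (hδ1 : δ ≤ 1)
    (hM : max ((2:ℝ) ^ (8 * k)) ((L:ℝ) ^ 2 * (2:ℝ) ^ (4 * k + 10) / ((k:ℝ) ^ 2 * δ ^ 2)) ≤ M)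
    (e h : ℕ → Ω → ℝ)
    (hme : ∀ j, Measurable (e j)) (hmh : ∀ j, Measurable (h j))
    (hind : iIndepFun
      (Sum.elim (fun j : {j : ℕ // 1 ≤ j ∧ j ≤ R - 1} => e j.1)
                (fun j : {j : ℕ // 2 ≤ j ∧ j ≤ R - 1} => h j.1)) μ)
    (htaile : ∀ j, 1 ≤ j → j ≤ R - 1 → ∀ x : ℝ, 0 < x →
      μ {ω | x ≤ |e j ω|} ≤ ENNReal.ofReal ((2:ℝ) ^ (4 * k + 3) / (x ^ 2 * M)))
    (htailh : ∀ j, 2 ≤ j → j ≤ R - 1 → ∀ x : ℝ, 0 < x →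
      μ {ω | x ≤ |h j ω|} ≤ ENNReal.ofReal ((2:ℝ) ^ (2 * k + 3) / (x ^ 2 * M))) :
    μ {ω | δ ≤ |(∏ j ∈ Finset.Icc 1 (R - 1), (1 + e j ω)) /
                  (∏ j ∈ Finset.Icc 2 (R - 1), (1 + h j ω)) - 1|}
      ≤ ENNReal.ofReal ((2:ℝ) ^ (4 * k + 11) * (L:ℝ) ^ 3 / (δ ^ 2 * (k:ℝ) ^ 3 * M)) := by
  obtain ⟨m, rfl⟩ : ∃ m, R = m + 2 := ⟨R - 2, by omega⟩
  have hR1 : m + 2 - 1 = m + 1 := rfl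
  rw [hR1]
  have hm2 : (0:ℝ) < (m:ℝ) + 2 := by positivity
  have hk0 : (0:ℝ) < (k:ℝ) := by positivity
  have hM0 : (0:ℝ) < M :=
    lt_of_lt_of_le (by positivity) ((le_max_left _ _).trans hM)
  set t := δ / (8 * ((m:ℝ)+2)) with htdef
  have ht0 : 0 < t := by positivity
  -- inclusion into union of tail events
  have hsub : {ω | δ ≤ |(∏ j ∈ Finset.Icc 1 (m+1), (1 + e j ω)) /
                  (∏ j ∈ Finset.Icc 2 (m+1), (1 + h j ω)) - 1|}
      ⊆ (⋃ j ∈ Finset.Icc 1 (m+1), {ω | t ≤ |e j ω|})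
        ∪ ⋃ j ∈ Finset.Icc 2 (m+1), {ω | t ≤ |h j ω|} := by
    intro ω hω
    simp only [Set.mem_setOf_eq] at hω
    by_contra hc
    simp only [Set.mem_union, Set.mem_iUnion, Set.mem_setOf_eq, not_or, not_exists,
      not_le] at hc
    exact absurd hω (not_le.mpr (aux_qclose m δ hδ0 hδ1 (fun j => e j ω) (fun j => h j ω)
      (fun j hj => (hc.1 j hj).le) (fun j hj => (hc.2 j hj).le)))
  have hsum1 : ∑ j ∈ Finset.Icc 1 (m+1), μ {ω | t ≤ |e j ω|}
      ≤ (m+1) • ENNReal.ofReal ((2:ℝ) ^ (4 * k + 3) / (t ^ 2 * M)) := by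
    calc ∑ j ∈ Finset.Icc 1 (m+1), μ {ω | t ≤ |e j ω|}
        ≤ ∑ _j ∈ Finset.Icc 1 (m+1), ENNReal.ofReal ((2:ℝ) ^ (4 * k + 3) / (t ^ 2 * M)) := by
          refine Finset.sum_le_sum (fun j hj => ?_)
          obtain ⟨hj1, hj2⟩ := Finset.mem_Icc.mp hj
          exact htaile j hj1 (by omega) t ht0
      _ = (m+1) • ENNReal.ofReal ((2:ℝ) ^ (4 * k + 3) / (t ^ 2 * M)) := by
          rw [Finset.sum_const, Nat.card_Icc]
          congr 1
  have hsum2 : ∑ j ∈ Finset.Icc 2 (m+1), μ {ω | t ≤ |h j ω|}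
      ≤ m • ENNReal.ofReal ((2:ℝ) ^ (2 * k + 3) / (t ^ 2 * M)) := by
    calc ∑ j ∈ Finset.Icc 2 (m+1), μ {ω | t ≤ |h j ω|}
        ≤ ∑ _j ∈ Finset.Icc 2 (m+1), ENNReal.ofReal ((2:ℝ) ^ (2 * k + 3) / (t ^ 2 * M)) := by
          refine Finset.sum_le_sum (fun j hj => ?_)
          obtain ⟨hj1, hj2⟩ := Finset.mem_Icc.mp hj
          exact htailh j hj1 (by omega) t ht0
      _ = m • ENNReal.ofReal ((2:ℝ) ^ (2 * k + 3) / (t ^ 2 * M)) := by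
          rw [Finset.sum_const, Nat.card_Icc]
          congr 1
  -- the real-number comparison
  have hLr : (L:ℝ) = ((m:ℝ)+2) * (k:ℝ) := by rw [hL]; push_cast; ring
  have hreal : ((m:ℝ)+1) * ((2:ℝ) ^ (4 * k + 3) / (t ^ 2 * M))
      + (m:ℝ) * ((2:ℝ) ^ (2 * k + 3) / (t ^ 2 * M))
      ≤ (2:ℝ) ^ (4 * k + 11) * (L:ℝ) ^ 3 / (δ ^ 2 * (k:ℝ) ^ 3 * M) := by
    have hAB : (2:ℝ) ^ (2 * k + 3) ≤ (2:ℝ) ^ (4 * k + 3) :=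
      pow_le_pow_right₀ (by norm_num) (by omega)
    have hX0 : (0:ℝ) < (2:ℝ) ^ (4 * k + 3) := by positivity
    have hmn : (0:ℝ) ≤ (m:ℝ) := Nat.cast_nonneg m
    have key : ((m:ℝ)+1) * (2:ℝ) ^ (4 * k + 3) + (m:ℝ) * (2:ℝ) ^ (2 * k + 3)
        ≤ (((m:ℝ))+2) * (2:ℝ) ^ (4 * k + 5) := by
      have h45 : (2:ℝ) ^ (4 * k + 5) = 4 * (2:ℝ) ^ (4 * k + 3) := by
        rw [show 4 * k + 5 = (4 * k + 3) + 2 from by omega, pow_add]; ring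
      rw [h45]
      nlinarith [mul_le_mul_of_nonneg_left hAB hmn]
    have heq : (2:ℝ) ^ (4 * k + 11) * (L:ℝ) ^ 3 / (δ ^ 2 * (k:ℝ) ^ 3 * M)
        = (((m:ℝ)+2) * (2:ℝ) ^ (4 * k + 5)) / (t ^ 2 * M) := by
      rw [hLr, htdef, show (2:ℝ) ^ (4 * k + 11) = (2:ℝ) ^ (4 * k + 5) * 64 from by
        rw [show 4 * k + 11 = (4 * k + 5) + 6 from by omega, pow_add]; norm_num]
      field_simp
      ring
    rw [heq, show ((m:ℝ)+1) * ((2:ℝ) ^ (4 * k + 3) / (t ^ 2 * M))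
      + (m:ℝ) * ((2:ℝ) ^ (2 * k + 3) / (t ^ 2 * M))
      = (((m:ℝ)+1) * (2:ℝ) ^ (4 * k + 3) + (m:ℝ) * (2:ℝ) ^ (2 * k + 3)) / (t ^ 2 * M)
      from by ring]
    have hd : (0:ℝ) < t ^ 2 * M := by positivity
    gcongr
  calc μ {ω | δ ≤ |(∏ j ∈ Finset.Icc 1 (m+1), (1 + e j ω)) /
                  (∏ j ∈ Finset.Icc 2 (m+1), (1 + h j ω)) - 1|}
      ≤ μ ((⋃ j ∈ Finset.Icc 1 (m+1), {ω | t ≤ |e j ω|})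
        ∪ ⋃ j ∈ Finset.Icc 2 (m+1), {ω | t ≤ |h j ω|}) := measure_mono hsub
    _ ≤ μ (⋃ j ∈ Finset.Icc 1 (m+1), {ω | t ≤ |e j ω|})
        + μ (⋃ j ∈ Finset.Icc 2 (m+1), {ω | t ≤ |h j ω|}) := measure_union_le _ _
    _ ≤ ∑ j ∈ Finset.Icc 1 (m+1), μ {ω | t ≤ |e j ω|}
        + ∑ j ∈ Finset.Icc 2 (m+1), μ {ω | t ≤ |h j ω|} :=
          add_le_add (measure_biUnion_finset_le _ _) (measure_biUnion_finset_le _ _)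
    _ ≤ (m+1) • ENNReal.ofReal ((2:ℝ) ^ (4 * k + 3) / (t ^ 2 * M))
        + m • ENNReal.ofReal ((2:ℝ) ^ (2 * k + 3) / (t ^ 2 * M)) := add_le_add hsum1 hsum2
    _ = ENNReal.ofReal (((m:ℝ)+1) * ((2:ℝ) ^ (4 * k + 3) / (t ^ 2 * M))
        + (m:ℝ) * ((2:ℝ) ^ (2 * k + 3) / (t ^ 2 * M))) := by
          have c1 : ENNReal.ofReal ((m:ℝ)+1) = ((m+1 : ℕ) : ENNReal) := by
            rw [← ENNReal.ofReal_natCast (m+1)]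
            congr 1
            push_cast
            ring
          have c2 : ENNReal.ofReal ((m:ℝ)) = (m : ENNReal) := ENNReal.ofReal_natCast m
          rw [ENNReal.ofReal_add (by positivity) (by positivity),
            ENNReal.ofReal_mul (by positivity), ENNReal.ofReal_mul (by positivity),
            nsmul_eq_mul, nsmul_eq_mul, c1, c2]
    _ ≤ ENNReal.ofReal ((2:ℝ) ^ (4 * k + 11) * (L:ℝ) ^ 3 / (δ ^ 2 * (k:ℝ) ^ 3 * M)) :=
          ENNReal.ofReal_le_ofReal hreal
end

section
/- Let k ≥ 1 be an integer and let p, P_A, P_B, e_0, e_A, e_B be real numbers with |p| ≤ 1, P_A ≥ 2^{−2k}, P_B ≥ 2^{−2k}, and ε := 2^{4k} · max{ |e_0|, |e_A|, |e_B| } ≤ 1. Then | (p + e_0) / ( P_A (1 + e_A) · P_B (1 + e_B) ) − p / (P_A P_B) | ≤ 16 ε. -/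
/-- Deterministic propagation of errors in the normalized PT-moment estimator:
with `|p| ≤ 1`, `P_A, P_B ≥ 2^{-2k}` and `ε := 2^{4k}·max{|e₀|,|e_A|,|e_B|} ≤ 1`, one has
`| (p+e₀)/(P_A(1+e_A)·P_B(1+e_B)) - p/(P_A P_B) | ≤ 16 ε`. -/
theorem normalized_pt_estimator_error_bound
    (k : ℕ) (hk : 1 ≤ k) (p PA PB e0 eA eB : ℝ)
    (hp : |p| ≤ 1)
    (hPA : ((2:ℝ) ^ (2 * k))⁻¹ ≤ PA) (hPB : ((2:ℝ) ^ (2 * k))⁻¹ ≤ PB)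
    (hε : (2:ℝ) ^ (4 * k) * max |e0| (max |eA| |eB|) ≤ 1) :
    |(p + e0) / (PA * (1 + eA) * (PB * (1 + eB))) - p / (PA * PB)|
      ≤ 16 * ((2:ℝ) ^ (4 * k) * max |e0| (max |eA| |eB|)) := by
  set M := max |e0| (max |eA| |eB|) with hMdef
  have hM0 : 0 ≤ M := le_trans (abs_nonneg e0) (le_max_left _ _)
  have he0 : |e0| ≤ M := le_max_left _ _
  have heA : |eA| ≤ M := le_trans (le_max_left _ _) (le_max_right _ _)
  have heB : |eB| ≤ M := le_trans (le_max_right _ _) (le_max_right _ _)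
  have hpow : (16:ℝ) ≤ 2 ^ (4 * k) := by
    calc (16:ℝ) = 2 ^ 4 := by norm_num
    _ ≤ 2 ^ (4 * k) := by
      apply pow_le_pow_right₀ one_le_two; omega
  have hM : M ≤ 1 / 16 := by
    have h16 : 16 * M ≤ 2 ^ (4 * k) * M := mul_le_mul_of_nonneg_right hpow hM0
    linarith
  have ht : (0:ℝ) < ((2:ℝ) ^ (2 * k))⁻¹ := by positivity
  have hPA' : 0 < PA := lt_of_lt_of_le ht hPA
  have hPB' : 0 < PB := lt_of_lt_of_le ht hPB
  have heA' : -(1/16) ≤ eA := by have := neg_abs_le eA; linarith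
  have heB' : -(1/16) ≤ eB := by have := neg_abs_le eB; linarith
  have h1A : (15/16 : ℝ) ≤ 1 + eA := by linarith
  have h1B : (15/16 : ℝ) ≤ 1 + eB := by linarith
  have h1A' : (0:ℝ) < 1 + eA := by linarith
  have h1B' : (0:ℝ) < 1 + eB := by linarith
  have hpowsplit : ((2:ℝ) ^ (4 * k))⁻¹ = ((2:ℝ) ^ (2 * k))⁻¹ * ((2:ℝ) ^ (2 * k))⁻¹ := by
    rw [← mul_inv, ← pow_add]; ring_nf
  have hPAB : ((2:ℝ) ^ (4 * k))⁻¹ ≤ PA * PB := by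
    rw [hpowsplit]
    exact mul_le_mul hPA hPB ht.le hPA'.le
  have hEE : (1/4 : ℝ) ≤ (1 + eA) * (1 + eB) := by nlinarith
  have hD : ((2:ℝ) ^ (4 * k))⁻¹ * (1/4) ≤ PA * PB * ((1 + eA) * (1 + eB)) := by
    have h0 : (0:ℝ) < ((2:ℝ) ^ (4 * k))⁻¹ := by positivity
    exact mul_le_mul hPAB hEE (by norm_num) (by positivity)
  have hDpos : (0:ℝ) < PA * PB * ((1 + eA) * (1 + eB)) := by positivity
  have key : (p + e0) / (PA * (1 + eA) * (PB * (1 + eB))) - p / (PA * PB)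
      = (e0 - p * (eA + eB + eA * eB)) / (PA * PB * ((1 + eA) * (1 + eB))) := by
    field_simp
    ring
  have hN : |e0 - p * (eA + eB + eA * eB)| ≤ 4 * M := by
    have h1 : |e0 - p * (eA + eB + eA * eB)| ≤ |e0| + |p| * |eA + eB + eA * eB| := by
      calc |e0 - p * (eA + eB + eA * eB)| ≤ |e0| + |p * (eA + eB + eA * eB)| :=
            abs_sub _ _
        _ = |e0| + |p| * |eA + eB + eA * eB| := by rw [abs_mul]
    have h2 : |eA + eB + eA * eB| ≤ |eA| + |eB| + |eA| * |eB| := by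
      calc |eA + eB + eA * eB| ≤ |eA + eB| + |eA * eB| := abs_add_le _ _
        _ ≤ |eA| + |eB| + |eA| * |eB| := by
            have := abs_add_le eA eB
            rw [abs_mul]
            linarith
    have hpnn : (0:ℝ) ≤ |p| := abs_nonneg p
    have h3 : |p| * |eA + eB + eA * eB| ≤ |eA| + |eB| + |eA| * |eB| := by
      calc |p| * |eA + eB + eA * eB| ≤ 1 * |eA + eB + eA * eB| :=
            mul_le_mul_of_nonneg_right hp (abs_nonneg _)
        _ = |eA + eB + eA * eB| := one_mul _
        _ ≤ _ := h2
    nlinarith [abs_nonneg eA, abs_nonneg eB]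
  rw [key, abs_div, abs_of_pos hDpos]
  calc |e0 - p * (eA + eB + eA * eB)| / (PA * PB * ((1 + eA) * (1 + eB)))
      ≤ (4 * M) / (((2:ℝ) ^ (4 * k))⁻¹ * (1/4)) := by
        apply div_le_div₀ (by positivity) hN (by positivity) hD
    _ = 16 * ((2:ℝ) ^ (4 * k) * M) := by
        field_simp
        ring
end

section
/- Let k ≥ 1 be an integer and let M be a real number with M ≥ 3 · 2^{8k}. Let ρ_{AB} be a density matrix on a complex Hilbert space of dimension 2^{2k}, and let ρ_A, ρ_B be density matrices on complex Hilbert spaces of dimension 2^{k}. Let X, Y_A, Y_B be real-valued random variables with E[Y_A] = Tr(ρ_A³), E[Y_B] = Tr(ρ_B³), E[X] = p for some real number p, and with variances bounded by Var[X] ≤ 9 · 2^{2k} Tr(ρ_{AB}⁴)/M + 18 · 2^{6k} Tr(ρ_{AB}²)/(M−1)² + 6 · 2^{12k}/(M−2)³, Var[Y_A] ≤ 9 · 2^{k} Tr(ρ_A⁴)/M + 18 · 2^{3k} Tr(ρ_A²)/(M−1)² + 6 · 2^{6k}/(M−2)³, and the analogous bound for Y_B with ρ_B. Then for every α > 0: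 Pr( |Y_A/Tr(ρ_A³) − 1| ≥ α ) ≤ 27 · 2^{3k}/(α² M), Pr( |Y_B/Tr(ρ_B³) − 1| ≥ α ) ≤ 27 · 2^{3k}/(α² M), and Pr( |X − p| ≥ α ) ≤ 27 · 2^{2k}/(α² M). -/
open MeasureTheory ProbabilityTheory
open scoped ComplexOrder
open Matrix Finset
open scoped NNReal ENNReal


lemma trace_pow_eq {d : ℕ} {A : Matrix (Fin d) (Fin d) ℂ} (hA : A.IsHermitian) (n : ℕ) :
    (A ^ n).trace = ∑ i, ((hA.eigenvalues i : ℂ)) ^ n := by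
  set U : Matrix (Fin d) (Fin d) ℂ := (hA.eigenvectorUnitary : Matrix (Fin d) (Fin d) ℂ) with hUdef
  have hU : star U * U = 1 := (Matrix.mem_unitaryGroup_iff').mp (hA.eigenvectorUnitary).2
  have hU2 : U * star U = 1 := (Matrix.mem_unitaryGroup_iff).mp (hA.eigenvectorUnitary).2
  set D : Matrix (Fin d) (Fin d) ℂ := Matrix.diagonal (RCLike.ofReal ∘ hA.eigenvalues) with hD
  have h : ∀ n : ℕ, A ^ n = U * D ^ n * star U := by
    intro n
    induction n with
    | zero => simp [hU2]
    | succ m ih =>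
      calc A ^ (m+1) = A ^ m * A := pow_succ A m
      _ = (U * D ^ m * star U) * (U * D * star U) := by rw [ih]; congr 1; exact hA.spectral_theorem
      _ = U * D ^ m * (star U * U) * D * star U := by noncomm_ring
      _ = U * D ^ (m+1) * star U := by rw [hU]; noncomm_ring
  rw [h n, Matrix.trace_mul_cycle, hU, one_mul, Matrix.diagonal_pow, Matrix.trace_diagonal]
  simp

lemma density_trace_facts {d : ℕ} {A : Matrix (Fin d) (Fin d) ℂ}
    (hA : A.PosSemidef) (htr : A.trace = 1) :
    (0 ≤ ((A ^ 2).trace).re ∧ ((A ^ 2).trace).re ≤ 1) ∧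
    (1 / (d:ℝ) ^ 2 ≤ ((A ^ 3).trace).re) ∧
    (0 ≤ ((A ^ 4).trace).re ∧ ((A ^ 4).trace).re ≤ ((A ^ 3).trace).re ∧
      ((A ^ 4).trace).re ≤ 1) := by
  set lam := hA.1.eigenvalues with hlam
  have hnn : ∀ i, 0 ≤ lam i := fun i => hA.eigenvalues_nonneg i
  have hre : ∀ n : ℕ, ((A ^ n).trace).re = ∑ i, (lam i) ^ n := by
    intro n
    rw [trace_pow_eq hA.1 n, Complex.re_sum]
    refine Finset.sum_congr rfl fun i _ => ?_
    rw [← Complex.ofReal_pow, Complex.ofReal_re]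
  have hsum : ∑ i, lam i = 1 := by
    have h := hre 1
    rw [pow_one, htr] at h
    simp only [Complex.one_re, pow_one] at h
    exact h.symm
  have hle1 : ∀ i, lam i ≤ 1 := by
    intro i
    rw [← hsum]
    exact Finset.single_le_sum (fun j _ => hnn j) (Finset.mem_univ i)
  have hd : 0 < d := by
    rcases Nat.eq_zero_or_pos d with h | h
    · exfalso; subst h; simp at hsum
    · exact h
  have h2 : ∑ i, (lam i) ^ 2 ≤ 1 := by
    rw [← hsum]
    exact Finset.sum_le_sum fun i _ => by nlinarith [hnn i, hle1 i]
  have h2lb : 1 / (d:ℝ) ≤ ∑ i, (lam i) ^ 2 := by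
    have h := sq_sum_le_card_mul_sum_sq (s := Finset.univ) (f := lam)
    simp only [hsum, one_pow, Finset.card_univ, Fintype.card_fin] at h
    rw [div_le_iff₀ (by exact_mod_cast hd)]
    linarith [h]
  have h3cs : (∑ i, (lam i) ^ 2) ^ 2 ≤ ∑ i, (lam i) ^ 3 := by
    have h := Finset.sum_mul_sq_le_sq_mul_sq Finset.univ
      (fun i => Real.sqrt (lam i)) (fun i => lam i * Real.sqrt (lam i))
    have e1 : ∀ i, Real.sqrt (lam i) * (lam i * Real.sqrt (lam i)) = (lam i) ^ 2 := by
      intro i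
      rw [show Real.sqrt (lam i) * (lam i * Real.sqrt (lam i))
        = (Real.sqrt (lam i) * Real.sqrt (lam i)) * lam i by ring,
        Real.mul_self_sqrt (hnn i)]; ring
    simp only [e1] at h
    calc (∑ i, (lam i) ^ 2) ^ 2
        ≤ (∑ i, (Real.sqrt (lam i)) ^ 2) * ∑ i, (lam i * Real.sqrt (lam i)) ^ 2 := h
      _ = (∑ i, lam i) * ∑ i, (lam i) ^ 3 := by
          congr 1
          · exact Finset.sum_congr rfl fun i _ => Real.sq_sqrt (hnn i)
          · exact Finset.sum_congr rfl fun i _ => by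
              rw [mul_pow, Real.sq_sqrt (hnn i)]; ring
      _ = ∑ i, (lam i) ^ 3 := by rw [hsum, one_mul]
  have h3lb : 1 / (d:ℝ) ^ 2 ≤ ∑ i, (lam i) ^ 3 := by
    calc 1 / (d:ℝ) ^ 2 = (1 / (d:ℝ)) ^ 2 := by rw [div_pow, one_pow]
      _ ≤ (∑ i, (lam i) ^ 2) ^ 2 := pow_le_pow_left₀ (by positivity) h2lb 2
      _ ≤ _ := h3cs
  have h43 : ∑ i, (lam i) ^ 4 ≤ ∑ i, (lam i) ^ 3 :=
    Finset.sum_le_sum fun i _ => pow_le_pow_of_le_one (hnn i) (hle1 i) (by norm_num)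
  have h41 : ∑ i, (lam i) ^ 4 ≤ 1 := by
    rw [← hsum]
    refine Finset.sum_le_sum fun i _ => ?_
    calc lam i ^ 4 ≤ lam i ^ 1 := pow_le_pow_of_le_one (hnn i) (hle1 i) (by norm_num)
      _ = lam i := pow_one _
  refine ⟨⟨?_, ?_⟩, ?_, ?_, ?_, ?_⟩ <;> rw [hre]
  · positivity
  · exact h2
  · exact h3lb
  · positivity
  · rw [hre]; exact h43
  · exact h41


lemma arithA (a M t2 t3 t4 : ℝ) (ha : 2 ≤ a) (hM : 3 * a ^ 8 ≤ M)
    (ht3 : 1 / a ^ 2 ≤ t3) (ht40 : 0 ≤ t4) (ht43 : t4 ≤ t3)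
    (ht20 : 0 ≤ t2) (ht21 : t2 ≤ 1) :
    9 * a * t4 / M + 18 * a ^ 3 * t2 / (M - 1) ^ 2 + 6 * a ^ 6 / (M - 2) ^ 3
      ≤ 27 * a ^ 3 * t3 ^ 2 / M := by
  have ha0 : (0:ℝ) < a := by linarith
  have ha4 : (16:ℝ) ≤ a ^ 4 := by linarith [sq_nonneg (a - 2), sq_nonneg (a ^ 2 - 4)]
  have ha8 : (256:ℝ) ≤ a ^ 8 := by linarith [ha4, sq_nonneg (a ^ 4 - 16)]
  have hM0 : (768:ℝ) ≤ M := by nlinarith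
  have hMpos : (0:ℝ) < M := by linarith
  have hM1 : (0:ℝ) < M - 1 := by linarith
  have hM2 : (0:ℝ) < M - 2 := by linarith
  have ht3' : 1 ≤ a ^ 2 * t3 := by
    have h := (div_le_iff₀ (by positivity : (0:ℝ) < a ^ 2)).mp ht3
    linarith [h]
  have ht30 : 0 < t3 := by
    have h : (0:ℝ) < 1 / a ^ 2 := by positivity
    linarith
  have ht3sq : 1 ≤ a ^ 4 * t3 ^ 2 := by
    have h := mul_le_mul ht3' ht3' zero_le_one
      (by positivity : (0:ℝ) ≤ a ^ 2 * t3)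
    linarith [h]
  have h1 : 9 * a * t4 / M ≤ 9 * a ^ 3 * t3 ^ 2 / M := by
    apply div_le_div_of_nonneg_right ?_ hMpos.le
    have e1 : 9 * a * t4 ≤ 9 * a * t3 := by
      linarith [mul_nonneg ha0.le (sub_nonneg.mpr ht43)]
    have e2 : 9 * a * t3 ≤ 9 * a ^ 3 * t3 ^ 2 := by
      linarith [mul_nonneg (sub_nonneg.mpr ht3') (mul_nonneg ha0.le ht30.le)]
    linarith
  have h2 : 18 * a ^ 3 * t2 / (M - 1) ^ 2 ≤ 9 * a ^ 3 * t3 ^ 2 / M := by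
    rw [div_le_div_iff₀ (by positivity) hMpos]
    have h416 : 16 * a ^ 4 ≤ a ^ 8 := by
      linarith [mul_nonneg (pow_nonneg ha0.le 4) (sub_nonneg.mpr ha4)]
    have key : 2 * a ^ 4 * M ≤ (M - 1) ^ 2 := by
      linarith [mul_le_mul_of_nonneg_right hM hMpos.le,
        mul_le_mul_of_nonneg_right h416 hMpos.le,
        mul_le_mul_of_nonneg_right ha4 hMpos.le]
    have e1 : 2 * M ≤ t3 ^ 2 * (M - 1) ^ 2 := by
      have s1 : (M - 1) ^ 2 / a ^ 4 ≤ t3 ^ 2 * (M - 1) ^ 2 := by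
        rw [div_le_iff₀ (by positivity : (0:ℝ) < a ^ 4)]
        linarith [mul_nonneg (sub_nonneg.mpr ht3sq) (sq_nonneg (M - 1))]
      have s2 : 2 * M ≤ (M - 1) ^ 2 / a ^ 4 := by
        rw [le_div_iff₀ (by positivity : (0:ℝ) < a ^ 4)]
        linarith [key]
      linarith
    have e2 : 18 * a ^ 3 * t2 * M ≤ 18 * a ^ 3 * M := by
      linarith [mul_nonneg (mul_nonneg (by positivity : (0:ℝ) ≤ 18 * a ^ 3) hMpos.le)
        (sub_nonneg.mpr ht21)]
    have e3 := mul_le_mul_of_nonneg_left e1 (by positivity : (0:ℝ) ≤ 9 * a ^ 3)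
    linarith [e2, e3]
  have h3 : 6 * a ^ 6 / (M - 2) ^ 3 ≤ 9 * a ^ 3 * t3 ^ 2 / M := by
    rw [div_le_div_iff₀ (by positivity) hMpos]
    have hcube : (M / 2) ^ 3 ≤ (M - 2) ^ 3 :=
      pow_le_pow_left₀ (by linarith) (by linarith) 3
    have hMM : 9 * (a ^ 8 * a ^ 8) ≤ M ^ 2 := by
      linarith [mul_le_mul hM hM (by positivity) hMpos.le]
    have ha9 : (2:ℝ) ≤ a ^ 9 := by
      have h := pow_le_pow_left₀ (by norm_num : (0:ℝ) ≤ 2) ha 9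
      norm_num at h; linarith
    have h716 : a ^ 7 * 2 ≤ a ^ 8 * a ^ 8 := by
      have h := mul_le_mul_of_nonneg_left ha9 (pow_nonneg ha0.le 7)
      linarith [h]
    have key3 : 48 * a ^ 7 * M ≤ 9 * M ^ 3 := by
      linarith [mul_le_mul_of_nonneg_right hMM hMpos.le,
        mul_le_mul_of_nonneg_right h716 hMpos.le,
        mul_pos (pow_pos ha0 7) hMpos]
    have s1 : 9 * (M / 2) ^ 3 / a ≤ 9 * a ^ 3 * t3 ^ 2 * (M / 2) ^ 3 := by
      rw [div_le_iff₀ ha0]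
      linarith [mul_nonneg (sub_nonneg.mpr ht3sq)
        (pow_nonneg (by linarith : (0:ℝ) ≤ M / 2) 3)]
    have s2 : 6 * a ^ 6 * M ≤ 9 * (M / 2) ^ 3 / a := by
      rw [le_div_iff₀ ha0]
      linarith [key3]
    have s3 : 9 * a ^ 3 * t3 ^ 2 * (M / 2) ^ 3 ≤ 9 * a ^ 3 * t3 ^ 2 * (M - 2) ^ 3 :=
      mul_le_mul_of_nonneg_left hcube (by positivity)
    linarith
  calc 9 * a * t4 / M + 18 * a ^ 3 * t2 / (M - 1) ^ 2 + 6 * a ^ 6 / (M - 2) ^ 3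
      ≤ 9 * a ^ 3 * t3 ^ 2 / M + 9 * a ^ 3 * t3 ^ 2 / M + 9 * a ^ 3 * t3 ^ 2 / M :=
        add_le_add (add_le_add h1 h2) h3
    _ = 27 * a ^ 3 * t3 ^ 2 / M := by ring

lemma arithB (b M t2 t4 : ℝ) (hb : 4 ≤ b) (hM : 3 * b ^ 4 ≤ M)
    (ht40 : 0 ≤ t4) (ht41 : t4 ≤ 1) (ht20 : 0 ≤ t2) (ht21 : t2 ≤ 1) :
    9 * b * t4 / M + 18 * b ^ 3 * t2 / (M - 1) ^ 2 + 6 * b ^ 6 / (M - 2) ^ 3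
      ≤ 27 * b / M := by
  have hb0 : (0:ℝ) < b := by linarith
  have hb2 : (16:ℝ) ≤ b ^ 2 := by nlinarith
  have hb4 : (256:ℝ) ≤ b ^ 4 := by nlinarith [hb2, sq_nonneg (b ^ 2 - 16)]
  have hM0 : (768:ℝ) ≤ M := by nlinarith
  have hMpos : (0:ℝ) < M := by linarith
  have hM1 : (0:ℝ) < M - 1 := by linarith
  have hM2 : (0:ℝ) < M - 2 := by linarith
  have h1 : 9 * b * t4 / M ≤ 9 * b / M := by
    apply div_le_div_of_nonneg_right ?_ hMpos.le
    nlinarith [mul_nonneg hb0.le (sub_nonneg.mpr ht41)]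
  have h2 : 18 * b ^ 3 * t2 / (M - 1) ^ 2 ≤ 9 * b / M := by
    rw [div_le_div_iff₀ (by positivity) hMpos]
    have h416 : 16 * b ^ 2 ≤ b ^ 4 := by
      nlinarith [mul_nonneg (sq_nonneg b) (sub_nonneg.mpr hb2)]
    have key : 2 * b ^ 2 * M ≤ (M - 1) ^ 2 := by
      nlinarith [mul_le_mul_of_nonneg_right hM hMpos.le,
        mul_le_mul_of_nonneg_right h416 hMpos.le,
        mul_le_mul_of_nonneg_right hb2 hMpos.le]
    have e2 : 18 * b ^ 3 * t2 * M ≤ 18 * b ^ 3 * M := by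
      nlinarith [mul_nonneg (mul_nonneg (by positivity : (0:ℝ) ≤ 18 * b ^ 3) hMpos.le)
        (sub_nonneg.mpr ht21)]
    have e3 := mul_le_mul_of_nonneg_left key (by positivity : (0:ℝ) ≤ 9 * b)
    nlinarith [e2, e3]
  have h3 : 6 * b ^ 6 / (M - 2) ^ 3 ≤ 9 * b / M := by
    rw [div_le_div_iff₀ (by positivity) hMpos]
    have hcube : (M / 2) ^ 3 ≤ (M - 2) ^ 3 :=
      pow_le_pow_left₀ (by linarith) (by linarith) 3
    have hMM : 9 * (b ^ 4 * b ^ 4) ≤ M ^ 2 := by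
      nlinarith [mul_le_mul hM hM (by positivity) hMpos.le]
    have hb3 : (64:ℝ) ≤ b ^ 3 := by
      have h := pow_le_pow_left₀ (by norm_num : (0:ℝ) ≤ 4) hb 3
      norm_num at h; linarith
    have h58 : b ^ 5 * 6 ≤ b ^ 4 * b ^ 4 := by
      have h := mul_le_mul_of_nonneg_left hb3 (pow_nonneg hb0.le 5)
      nlinarith [h]
    have key3 : 48 * b ^ 5 * M ≤ 9 * M ^ 3 := by
      nlinarith [mul_le_mul_of_nonneg_right hMM hMpos.le,
        mul_le_mul_of_nonneg_right h58 hMpos.le,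
        mul_pos (pow_pos hb0 5) hMpos]
    have key4 := mul_le_mul_of_nonneg_left key3 hb0.le
    have s3 : 9 * b * (M / 2) ^ 3 ≤ 9 * b * (M - 2) ^ 3 :=
      mul_le_mul_of_nonneg_left hcube (by positivity)
    nlinarith [key4, s3]
  calc 9 * b * t4 / M + 18 * b ^ 3 * t2 / (M - 1) ^ 2 + 6 * b ^ 6 / (M - 2) ^ 3
      ≤ 9 * b / M + 9 * b / M + 9 * b / M := add_le_add (add_le_add h1 h2) h3
    _ = 27 * b / M := by ring


lemma cheb {Ω : Type*} [MeasurableSpace Ω] (μ : Measure Ω) [IsProbabilityMeasure μ]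
    (X : Ω → ℝ) (hXm : Measurable X) (m c V B : ℝ)
    (hm : ∫ ω, X ω ∂μ = m) (hc : 0 < c)
    (hv : evariance X μ ≤ ENNReal.ofReal V) (hVB : V / c ^ 2 ≤ B) :
    μ {ω | c ≤ |X ω - m|} ≤ ENNReal.ofReal B := by
  have hcnn : c.toNNReal ≠ 0 := by simp [hc]
  have h := meas_ge_le_evariance_div_sq (μ := μ) (X := X)
    hXm.aestronglyMeasurable hcnn
  rw [hm] at h
  have hco : ((c.toNNReal : ℝ≥0) : ℝ) = c := Real.coe_toNNReal c hc.le
  have hset : {ω | ((c.toNNReal : ℝ≥0) : ℝ) ≤ |X ω - m|} = {ω | c ≤ |X ω - m|} := by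
    rw [hco]
  rw [hset] at h
  refine h.trans ?_
  have hc2 : ((c.toNNReal : ℝ≥0∞)) ^ 2 = ENNReal.ofReal (c ^ 2) := by
    rw [ENNReal.ofReal_pow hc.le]
    congr 1
  rw [hc2]
  calc evariance X μ / ENNReal.ofReal (c ^ 2)
      ≤ ENNReal.ofReal V / ENNReal.ofReal (c ^ 2) := by
        exact ENNReal.div_le_div hv le_rfl
    _ = ENNReal.ofReal (V / c ^ 2) := by
        rw [ENNReal.ofReal_div_of_pos (by positivity)]
    _ ≤ ENNReal.ofReal B := ENNReal.ofReal_le_ofReal hVB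


set_option maxHeartbeats 1000000 in
/-- Chebyshev-type tail bounds for the (third) PT-moment and
third-moment estimators, given the variance bounds of Rath et al. -/
theorem chebyshev_pt_moment_estimators
    {Ω : Type*} [MeasurableSpace Ω] (μ : Measure Ω) [IsProbabilityMeasure μ]
    (k : ℕ) (hk : 1 ≤ k) (M : ℝ) (hM : 3 * (2:ℝ) ^ (8 * k) ≤ M)
    (ρAB : Matrix (Fin (2 ^ (2 * k))) (Fin (2 ^ (2 * k))) ℂ)
    (hρAB : ρAB.PosSemidef) (htrAB : ρAB.trace = 1)
    (ρA ρB : Matrix (Fin (2 ^ k)) (Fin (2 ^ k)) ℂ)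
    (hρA : ρA.PosSemidef) (htrA : ρA.trace = 1)
    (hρB : ρB.PosSemidef) (htrB : ρB.trace = 1)
    (X YA YB : Ω → ℝ) (hXm : Measurable X) (hYAm : Measurable YA) (hYBm : Measurable YB)
    (p : ℝ) (hmX : ∫ ω, X ω ∂μ = p)
    (hmA : ∫ ω, YA ω ∂μ = ((ρA ^ 3).trace).re)
    (hmB : ∫ ω, YB ω ∂μ = ((ρB ^ 3).trace).re)
    (hvX : evariance X μ ≤ ENNReal.ofReal
      (9 * (2:ℝ) ^ (2 * k) * ((ρAB ^ 4).trace).re / M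
        + 18 * (2:ℝ) ^ (6 * k) * ((ρAB ^ 2).trace).re / (M - 1) ^ 2
        + 6 * (2:ℝ) ^ (12 * k) / (M - 2) ^ 3))
    (hvA : evariance YA μ ≤ ENNReal.ofReal
      (9 * (2:ℝ) ^ k * ((ρA ^ 4).trace).re / M
        + 18 * (2:ℝ) ^ (3 * k) * ((ρA ^ 2).trace).re / (M - 1) ^ 2
        + 6 * (2:ℝ) ^ (6 * k) / (M - 2) ^ 3))
    (hvB : evariance YB μ ≤ ENNReal.ofReal
      (9 * (2:ℝ) ^ k * ((ρB ^ 4).trace).re / M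
        + 18 * (2:ℝ) ^ (3 * k) * ((ρB ^ 2).trace).re / (M - 1) ^ 2
        + 6 * (2:ℝ) ^ (6 * k) / (M - 2) ^ 3)) :
    ∀ α : ℝ, 0 < α →
      μ {ω | α ≤ |YA ω / ((ρA ^ 3).trace).re - 1|}
          ≤ ENNReal.ofReal (27 * (2:ℝ) ^ (3 * k) / (α ^ 2 * M)) ∧
      μ {ω | α ≤ |YB ω / ((ρB ^ 3).trace).re - 1|}
          ≤ ENNReal.ofReal (27 * (2:ℝ) ^ (3 * k) / (α ^ 2 * M)) ∧
      μ {ω | α ≤ |X ω - p|}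
          ≤ ENNReal.ofReal (27 * (2:ℝ) ^ (2 * k) / (α ^ 2 * M)) := by
  intro α hα
  set a : ℝ := (2:ℝ) ^ k with ha_def
  have ha : 2 ≤ a := by
    calc (2:ℝ) = 2 ^ 1 := (pow_one 2).symm
      _ ≤ 2 ^ k := pow_le_pow_right₀ one_le_two hk
  have ha0 : 0 < a := by linarith
  have hMpos : 0 < M := by
    have : (0:ℝ) < 3 * 2 ^ (8 * k) := by positivity
    linarith
  have e2k : (2:ℝ) ^ (2 * k) = a ^ 2 := by rw [mul_comm, pow_mul]
  have e3k : (2:ℝ) ^ (3 * k) = a ^ 3 := by rw [mul_comm, pow_mul]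
  have e6k : (2:ℝ) ^ (6 * k) = a ^ 6 := by rw [mul_comm, pow_mul]
  have e8k : (2:ℝ) ^ (8 * k) = a ^ 8 := by rw [mul_comm, pow_mul]
  have e12k : (2:ℝ) ^ (12 * k) = a ^ 12 := by rw [mul_comm, pow_mul]
  have hMa : 3 * a ^ 8 ≤ M := by rw [← e8k]; exact hM
  have hcast : ((2 ^ k : ℕ) : ℝ) = a := by push_cast; rfl
  have hcast2 : ((2 ^ (2 * k) : ℕ) : ℝ) = a ^ 2 := by push_cast; rw [mul_comm, pow_mul]
  -- Tail bound for the third-moment estimators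
  have hY : ∀ (ρ : Matrix (Fin (2 ^ k)) (Fin (2 ^ k)) ℂ) (hρ : ρ.PosSemidef)
      (htr : ρ.trace = 1) (Y : Ω → ℝ) (hYm : Measurable Y)
      (hm : ∫ ω, Y ω ∂μ = ((ρ ^ 3).trace).re)
      (hv : evariance Y μ ≤ ENNReal.ofReal
        (9 * (2:ℝ) ^ k * ((ρ ^ 4).trace).re / M
          + 18 * (2:ℝ) ^ (3 * k) * ((ρ ^ 2).trace).re / (M - 1) ^ 2
          + 6 * (2:ℝ) ^ (6 * k) / (M - 2) ^ 3)),
      μ {ω | α ≤ |Y ω / ((ρ ^ 3).trace).re - 1|}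
        ≤ ENNReal.ofReal (27 * (2:ℝ) ^ (3 * k) / (α ^ 2 * M)) := by
    intro ρ hρ htr Y hYm hm hv
    obtain ⟨⟨h20, h21⟩, h3lb, h40, h43, h41⟩ := density_trace_facts hρ htr
    rw [hcast] at h3lb
    set t : ℝ := ((ρ ^ 3).trace).re with ht_def
    have ht_lb : 1 / a ^ 2 ≤ t := h3lb
    have ht0 : 0 < t := lt_of_lt_of_le (by positivity) ht_lb
    have hset : {ω | α ≤ |Y ω / t - 1|} = {ω | α * t ≤ |Y ω - t|} := by
      ext ω
      simp only [Set.mem_setOf_eq]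
      rw [show Y ω / t - 1 = (Y ω - t) / t by field_simp, abs_div,
        abs_of_pos ht0, le_div_iff₀ ht0]
    rw [hset]
    have harith := arithA a M (((ρ ^ 2).trace).re) t (((ρ ^ 4).trace).re)
      ha hMa ht_lb h40 h43 h20 h21
    refine cheb μ Y hYm t (α * t)
      (9 * (2:ℝ) ^ k * ((ρ ^ 4).trace).re / M
        + 18 * (2:ℝ) ^ (3 * k) * ((ρ ^ 2).trace).re / (M - 1) ^ 2
        + 6 * (2:ℝ) ^ (6 * k) / (M - 2) ^ 3)
      (27 * (2:ℝ) ^ (3 * k) / (α ^ 2 * M)) hm (by positivity) hv ?_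
    rw [e3k, e6k]
    calc (9 * a * ((ρ ^ 4).trace).re / M
          + 18 * a ^ 3 * ((ρ ^ 2).trace).re / (M - 1) ^ 2
          + 6 * a ^ 6 / (M - 2) ^ 3) / (α * t) ^ 2
        ≤ (27 * a ^ 3 * t ^ 2 / M) / (α * t) ^ 2 :=
          div_le_div_of_nonneg_right harith (by positivity)
      _ = 27 * a ^ 3 / (α ^ 2 * M) := by
          field_simp
  refine ⟨hY ρA hρA htrA YA hYAm hmA hvA, hY ρB hρB htrB YB hYBm hmB hvB, ?_⟩
  -- Tail bound for X
  obtain ⟨⟨h20, h21⟩, h3lb, h40, h43, h41⟩ := density_trace_facts hρAB htrAB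
  set b : ℝ := (2:ℝ) ^ (2 * k) with hb_def
  have hb : 4 ≤ b := by
    rw [e2k]
    nlinarith
  have hb4 : b ^ 4 = (2:ℝ) ^ (8 * k) := by
    rw [hb_def, ← pow_mul]
    congr 1
    ring
  have hb3 : b ^ 3 = (2:ℝ) ^ (6 * k) := by
    rw [hb_def, ← pow_mul]
    congr 1
    ring
  have hb6 : b ^ 6 = (2:ℝ) ^ (12 * k) := by
    rw [hb_def, ← pow_mul]
    congr 1
    ring
  have hMb : 3 * b ^ 4 ≤ M := by rw [hb4]; exact hM
  have harith := arithB b M (((ρAB ^ 2).trace).re) (((ρAB ^ 4).trace).re)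
    hb hMb h40 h41 h20 h21
  refine cheb μ X hXm p α
    (9 * (2:ℝ) ^ (2 * k) * ((ρAB ^ 4).trace).re / M
      + 18 * (2:ℝ) ^ (6 * k) * ((ρAB ^ 2).trace).re / (M - 1) ^ 2
      + 6 * (2:ℝ) ^ (12 * k) / (M - 2) ^ 3)
    (27 * (2:ℝ) ^ (2 * k) / (α ^ 2 * M)) hmX hα hvX ?_
  rw [← hb_def, ← hb3, ← hb6]
  calc (9 * b * ((ρAB ^ 4).trace).re / M
        + 18 * b ^ 3 * ((ρAB ^ 2).trace).re / (M - 1) ^ 2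
        + 6 * b ^ 6 / (M - 2) ^ 3) / α ^ 2
      ≤ (27 * b / M) / α ^ 2 := div_le_div_of_nonneg_right harith (by positivity)
    _ = 27 * b / (α ^ 2 * M) := by
        field_simp
end

section
/- Let k ≥ 1 be an integer, let 0 < δ ≤ 1, and let M be a real number with M ≥ 27 · 2^{11k+9} / δ². Let p, P_A, P_B be real numbers with |p| ≤ 1, P_A ≥ 2^{−2k} and P_B ≥ 2^{−2k}. Let X, Y_A, Y_B be mutually independent real-valued random variables satisfying, for every α > 0, the tail bounds Pr( |X − p| ≥ α ) ≤ 27 · 2^{2k}/(α² M), Pr( |Y_A/P_A − 1| ≥ α ) ≤ 27 · 2^{3k}/(α² M), and Pr( |Y_B/P_B − 1| ≥ α ) ≤ 27 · 2^{3k}/(α² M). Define the random variable S = X/(Y_A Y_B). Then Pr( |S − p/(P_A P_B)| ≥ δ ) ≤ 81 · 2^{11k+9} / (M δ²). -/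
open MeasureTheory ProbabilityTheory

/-- Deterministic key estimate: if the three deviations are all below `α`, then the
estimator deviates from its target by less than `δ`. -/
lemma key_real (α PA PB p X YA YB δ : ℝ) (hα : 0 < α) (hα2 : α ≤ 1/2)
    (hPA : 0 < PA) (hPB : 0 < PB) (hp : |p| ≤ 1)
    (hX : |X - p| < α) (hA : |YA / PA - 1| < α) (hB : |YB / PB - 1| < α)
    (hδ : 16 * α ≤ δ * (PA * PB)) :
    |X / (YA * YB) - p / (PA * PB)| < δ := by
  have hPA0 : PA ≠ 0 := hPA.ne'
  have hPB0 : PB ≠ 0 := hPB.ne'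
  obtain ⟨a, hYA, hA⟩ : ∃ a, YA = PA * (1 + a) ∧ |a| < α :=
    ⟨YA / PA - 1, by field_simp; ring, hA⟩
  obtain ⟨b, hYB, hB⟩ : ∃ b, YB = PB * (1 + b) ∧ |b| < α :=
    ⟨YB / PB - 1, by field_simp; ring, hB⟩
  obtain ⟨ha1, ha2⟩ := abs_lt.mp hA
  obtain ⟨hb1, hb2⟩ := abs_lt.mp hB
  have h1a : (1:ℝ)/2 < 1 + a := by linarith
  have h1b : (1:ℝ)/2 < 1 + b := by linarith
  set D := (1 + a) * (1 + b) with hD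
  have hDpos : (1:ℝ)/4 < D := by nlinarith
  have hden : 0 < PA * PB * D := by positivity
  have heq : X / (YA * YB) - p / (PA * PB) = (X - p * D) / (PA * PB * D) := by
    rw [hYA, hYB]
    field_simp
    ring
  rw [heq, abs_div, abs_of_pos hden, div_lt_iff₀ hden]
  have hD1 : |D - 1| ≤ |a| + |b| + |a| * |b| := by
    have h : D - 1 = a + b + a * b := by rw [hD]; ring
    rw [h]
    calc |a + b + a * b| ≤ |a + b| + |a * b| := abs_add_le _ _
      _ ≤ |a| + |b| + |a| * |b| := by rw [abs_mul]; linarith [abs_add_le a b]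
  have hnum : |X - p * D| < 4 * α := by
    have h : X - p * D = (X - p) + (-p) * (D - 1) := by ring
    have h2 : |X - p * D| ≤ |X - p| + |p| * |D - 1| := by
      rw [h]
      calc |(X - p) + (-p) * (D - 1)| ≤ |X - p| + |(-p) * (D - 1)| := abs_add_le _ _
        _ = |X - p| + |p| * |D - 1| := by rw [abs_mul, abs_neg]
    have hab : |a| * |b| < α := by nlinarith [abs_nonneg a, abs_nonneg b]
    have hD1' : |D - 1| < 3 * α := by linarith
    have hp0 : 0 ≤ |p| := abs_nonneg p
    nlinarith [abs_nonneg (D - 1)]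
  nlinarith [mul_pos hPA hPB]

/-- Tail bound for the normalized-PT-moment estimator `S = X/(Y_A Y_B)`
built from three independent random variables with Chebyshev-type tails. -/
theorem normalized_pt_estimator_tail_bound
    {Ω : Type*} [MeasurableSpace Ω] (μ : Measure Ω) [IsProbabilityMeasure μ]
    (k : ℕ) (hk : 1 ≤ k) (δ M : ℝ) (hδ0 : 0 < δ) (hδ1 : δ ≤ 1)
    (hM : 27 * (2:ℝ) ^ (11 * k + 9) / δ ^ 2 ≤ M)
    (p PA PB : ℝ) (hp : |p| ≤ 1)
    (hPA : ((2:ℝ) ^ (2 * k))⁻¹ ≤ PA) (hPB : ((2:ℝ) ^ (2 * k))⁻¹ ≤ PB)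
    (X YA YB : Ω → ℝ)
    (hXm : Measurable X) (hYAm : Measurable YA) (hYBm : Measurable YB)
    (hind : iIndepFun ![X, YA, YB] μ)
    (htailX : ∀ α : ℝ, 0 < α →
      μ {ω | α ≤ |X ω - p|} ≤ ENNReal.ofReal (27 * (2:ℝ) ^ (2 * k) / (α ^ 2 * M)))
    (htailA : ∀ α : ℝ, 0 < α →
      μ {ω | α ≤ |YA ω / PA - 1|} ≤ ENNReal.ofReal (27 * (2:ℝ) ^ (3 * k) / (α ^ 2 * M)))
    (htailB : ∀ α : ℝ, 0 < α →
      μ {ω | α ≤ |YB ω / PB - 1|} ≤ ENNReal.ofReal (27 * (2:ℝ) ^ (3 * k) / (α ^ 2 * M))) :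
    μ {ω | δ ≤ |X ω / (YA ω * YB ω) - p / (PA * PB)|}
      ≤ ENNReal.ofReal (81 * (2:ℝ) ^ (11 * k + 9) / (M * δ ^ 2)) := by
  have hM0 : (0:ℝ) < M := lt_of_lt_of_le (by positivity) hM
  set α : ℝ := δ / 2 ^ (4 * k + 4) with hαdef
  have hα : 0 < α := by positivity
  have hα2 : α ≤ 1/2 := by
    rw [hαdef, div_le_iff₀ (by positivity)]
    have h8 : (2:ℝ) ^ 3 ≤ (2:ℝ) ^ (4 * k + 4) :=
      pow_le_pow_right₀ one_le_two (by omega)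
    nlinarith
  have hPA0 : (0:ℝ) < PA := lt_of_lt_of_le (by positivity) hPA
  have hPB0 : (0:ℝ) < PB := lt_of_lt_of_le (by positivity) hPB
  have hδPP : 16 * α ≤ δ * (PA * PB) := by
    have h1 : ((2:ℝ) ^ (2 * k))⁻¹ * ((2:ℝ) ^ (2 * k))⁻¹ ≤ PA * PB :=
      mul_le_mul hPA hPB (by positivity) hPA0.le
    have h2 : ((2:ℝ) ^ (2 * k))⁻¹ * ((2:ℝ) ^ (2 * k))⁻¹ = ((2:ℝ) ^ (4 * k))⁻¹ := by
      rw [← mul_inv, ← pow_add]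
      congr 2
      omega
    have h3 : 16 * α = δ * ((2:ℝ) ^ (4 * k))⁻¹ := by
      rw [hαdef]
      have h4 : (2:ℝ) ^ (4 * k + 4) = 2 ^ (4 * k) * 16 := by
        rw [pow_add]; norm_num
      rw [h4]
      field_simp
    rw [h2] at h1
    rw [h3]
    exact mul_le_mul_of_nonneg_left h1 hδ0.le
  -- union bound event inclusion
  have hsub : {ω | δ ≤ |X ω / (YA ω * YB ω) - p / (PA * PB)|} ⊆
      {ω | α ≤ |X ω - p|} ∪ ({ω | α ≤ |YA ω / PA - 1|} ∪ {ω | α ≤ |YB ω / PB - 1|}) := by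
    intro ω hω
    by_contra hc
    simp only [Set.mem_union, Set.mem_setOf_eq, not_or, not_le] at hc
    have hlt := key_real α PA PB p (X ω) (YA ω) (YB ω) δ hα hα2 hPA0 hPB0 hp
      hc.1 hc.2.1 hc.2.2 hδPP
    simp only [Set.mem_setOf_eq] at hω
    exact absurd hω (not_le.mpr hlt)
  have e1 := htailX α hα
  have e2 := htailA α hα
  have e3 := htailB α hα
  have hsum : 27 * (2:ℝ) ^ (2 * k) / (α ^ 2 * M) + (27 * (2:ℝ) ^ (3 * k) / (α ^ 2 * M)
      + 27 * (2:ℝ) ^ (3 * k) / (α ^ 2 * M)) ≤ 81 * (2:ℝ) ^ (11 * k + 9) / (M * δ ^ 2) := by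
    have hα2M : α ^ 2 * M = δ ^ 2 * M / 2 ^ (8 * k + 8) := by
      rw [hαdef, div_pow, ← pow_mul]
      rw [show (4 * k + 4) * 2 = 8 * k + 8 from by ring]
      ring
    have hrw : ∀ c : ℝ, c / (δ ^ 2 * M / 2 ^ (8 * k + 8)) = c * 2 ^ (8 * k + 8) / (δ ^ 2 * M) :=
      fun c => div_div_eq_mul_div c (δ ^ 2 * M) _
    rw [hα2M, ← add_div, ← add_div, hrw,
      show M * δ ^ 2 = δ ^ 2 * M from mul_comm _ _]
    gcongr ?_ / _
    have p1 : (2:ℝ) ^ (2 * k) * 2 ^ (8 * k + 8) = 2 ^ (10 * k + 8) := by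
      rw [← pow_add]; congr 1; omega
    have p2 : (2:ℝ) ^ (3 * k) * 2 ^ (8 * k + 8) = 2 ^ (11 * k + 8) := by
      rw [← pow_add]; congr 1; omega
    have p3 : (2:ℝ) ^ (11 * k + 9) = 2 * 2 ^ (11 * k + 8) := by
      rw [show 11 * k + 9 = (11 * k + 8) + 1 from by omega, pow_succ]; ring
    have ple : (2:ℝ) ^ (10 * k + 8) ≤ 2 ^ (11 * k + 8) :=
      pow_le_pow_right₀ one_le_two (by omega)
    nlinarith [pow_pos (by norm_num : (0:ℝ) < 2) (11 * k + 8), p1, p2, p3, ple]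
  calc μ {ω | δ ≤ |X ω / (YA ω * YB ω) - p / (PA * PB)|}
      ≤ μ ({ω | α ≤ |X ω - p|} ∪ ({ω | α ≤ |YA ω / PA - 1|} ∪ {ω | α ≤ |YB ω / PB - 1|})) :=
        measure_mono hsub
    _ ≤ μ {ω | α ≤ |X ω - p|} + μ ({ω | α ≤ |YA ω / PA - 1|} ∪ {ω | α ≤ |YB ω / PB - 1|}) :=
        measure_union_le _ _
    _ ≤ μ {ω | α ≤ |X ω - p|} + (μ {ω | α ≤ |YA ω / PA - 1|} + μ {ω | α ≤ |YB ω / PB - 1|}) :=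
        add_le_add le_rfl (measure_union_le _ _)
    _ ≤ ENNReal.ofReal (27 * (2:ℝ) ^ (2 * k) / (α ^ 2 * M))
        + (ENNReal.ofReal (27 * (2:ℝ) ^ (3 * k) / (α ^ 2 * M))
          + ENNReal.ofReal (27 * (2:ℝ) ^ (3 * k) / (α ^ 2 * M))) :=
        add_le_add e1 (add_le_add e2 e3)
    _ = ENNReal.ofReal (27 * (2:ℝ) ^ (2 * k) / (α ^ 2 * M)
        + (27 * (2:ℝ) ^ (3 * k) / (α ^ 2 * M) + 27 * (2:ℝ) ^ (3 * k) / (α ^ 2 * M))) := by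
        rw [← ENNReal.ofReal_add (by positivity) (by positivity),
          ← ENNReal.ofReal_add (by positivity) (by positivity)]
    _ ≤ ENNReal.ofReal (81 * (2:ℝ) ^ (11 * k + 9) / (M * δ ^ 2)) :=
        ENNReal.ofReal_le_ofReal hsum
end

section
/- Let α_2, β_2 > 0 be real numbers, let 0 < δ ≤ 1/2, and let k ≥ 2 and R ≥ 2 be integers with L = Rk and k ≥ log(α_2 L / δ)/β_2. Let P_2 > 0 and let e_2, …, e_{R−1} be real numbers with |e_j| ≤ α_2 e^{−β_2 k}, and set r_2 = P_2 · ∏_{j=2}^{R−1}(1 + e_j). Let M be a real number with M ≥ max{ 2^{8k}, 2^{4k+10} L² / δ² }, and let ε_1, …, ε_{R−1}, η_2, …, η_{R−1} be mutually independent real-valued random variables with, for every x > 0, Pr(|ε_j| ≥ x) ≤ 2^{4k+3}/(x² M) and Pr(|η_j| ≥ x) ≤ 2^{2k+3}/(x² M). Define the random variable r_2^{(e)} = r_2 · ( ∏_{j=1}^{R−1}(1 + ε_j) ) / ( ∏_{j=2}^{R−1}(1 + η_j) ). Then Pr( | r_2^{(e)} / P_2 − 1 | ≥ 7δ ) ≤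 2^{4k+11} L³ / (δ² M). -/
open MeasureTheory ProbabilityTheory
open scoped ENNReal

set_option maxHeartbeats 1000000

lemma aux_prod_lower (s : Finset ℕ) (a : ℕ → ℝ) (h : ∀ j ∈ s, |a j| ≤ 1) :
    0 ≤ ∏ j ∈ s, (1 + a j) ∧ 1 - ∑ j ∈ s, |a j| ≤ ∏ j ∈ s, (1 + a j) := by
  classical
  induction s using Finset.induction_on with
  | empty => simp
  | @insert i s' hi ih =>
    have hai := h i (Finset.mem_insert_self i s')
    have h' : ∀ j ∈ s', |a j| ≤ 1 := fun j hj => h j (Finset.mem_insert_of_mem hj)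
    obtain ⟨h0, h1⟩ := ih h'
    have habs := abs_le.mp hai
    have hsum0 : 0 ≤ ∑ j ∈ s', |a j| := Finset.sum_nonneg fun j _ => abs_nonneg _
    rw [Finset.prod_insert hi, Finset.sum_insert hi]
    constructor
    · exact mul_nonneg (by linarith [habs.1]) h0
    · nlinarith [abs_nonneg (a i), habs.1, habs.2,
        mul_nonneg (show (0:ℝ) ≤ 1 - |a i| by linarith) (show (0:ℝ) ≤ (∏ j ∈ s', (1 + a j)) - (1 - ∑ j ∈ s', |a j|) by linarith),
        mul_nonneg (show (0:ℝ) ≤ a i + |a i| by linarith [neg_abs_le (a i)]) h0,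
        mul_nonneg (abs_nonneg (a i)) hsum0]

lemma aux_prod_upper (s : Finset ℕ) (a : ℕ → ℝ) (h : ∀ j ∈ s, |a j| ≤ 1) :
    ∏ j ∈ s, (1 + a j) ≤ Real.exp (∑ j ∈ s, |a j|) := by
  rw [Real.exp_sum]
  apply Finset.prod_le_prod
  · intro j hj; linarith [(abs_le.mp (h j hj)).1]
  · intro j hj
    calc 1 + a j ≤ 1 + |a j| := by linarith [le_abs_self (a j)]
    _ ≤ Real.exp |a j| := by linarith [Real.add_one_le_exp |a j|]

lemma aux_exp_le (S : ℝ) (h0 : 0 ≤ S) (h1 : S ≤ 1/2) : Real.exp S ≤ 1 + S + 2*S^2 := by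
  have h2 : 1 - S ≤ Real.exp (-S) := by linarith [Real.add_one_le_exp (-S)]
  have h4 : 0 < Real.exp S := Real.exp_pos S
  rw [Real.exp_neg] at h2
  have h5 : (1 - S) * Real.exp S ≤ 1 := by
    calc (1-S) * Real.exp S ≤ (Real.exp S)⁻¹ * Real.exp S :=
          mul_le_mul_of_nonneg_right h2 h4.le
    _ = 1 := inv_mul_cancel₀ h4.ne'
  nlinarith [h5, h4, mul_nonneg (mul_nonneg h0 h0) (show (0:ℝ) ≤ 1 - 2*S by linarith)]

lemma aux_prod_bounds (s : Finset ℕ) (a : ℕ → ℝ) (t S : ℝ) (ht : 0 ≤ t) (ht1 : t ≤ 1)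
    (h : ∀ j ∈ s, |a j| ≤ t) (hcard : (s.card : ℝ) * t ≤ S) (hS : S ≤ 1/2) :
    1 - S ≤ ∏ j ∈ s, (1 + a j) ∧ ∏ j ∈ s, (1 + a j) ≤ 1 + S + 2*S^2 := by
  have h1 : ∀ j ∈ s, |a j| ≤ 1 := fun j hj => le_trans (h j hj) ht1
  have hsum : ∑ j ∈ s, |a j| ≤ S := by
    calc ∑ j ∈ s, |a j| ≤ ∑ _j ∈ s, t := Finset.sum_le_sum h
    _ = s.card * t := by rw [Finset.sum_const, nsmul_eq_mul]
    _ ≤ S := hcard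
  have hS0 : 0 ≤ S := le_trans (Finset.sum_nonneg fun j _ => abs_nonneg _) hsum
  obtain ⟨hp0, hp1⟩ := aux_prod_lower s a h1
  refine ⟨by linarith, ?_⟩
  calc ∏ j ∈ s, (1 + a j) ≤ Real.exp (∑ j ∈ s, |a j|) := aux_prod_upper s a h1
  _ ≤ Real.exp S := Real.exp_le_exp.mpr hsum
  _ ≤ 1 + S + 2*S^2 := aux_exp_le S hS0 hS

lemma aux_core (δ D E H : ℝ) (hδ0 : 0 < δ) (hδ : δ ≤ 1/2)
    (hD1 : 1 - δ ≤ D) (hD2 : D ≤ 1 + δ + 2*δ^2)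
    (hE1 : 1 - δ/2 ≤ E) (hE2 : E ≤ 1 + δ/2 + 2*(δ/2)^2)
    (hH1 : 1 - δ/2 ≤ H) (hH2 : H ≤ 1 + δ/2 + 2*(δ/2)^2) :
    |D * E / H - 1| < 7 * δ := by
  have hHpos : 0 < H := by linarith
  have hDpos : 0 < D := by linarith
  have hEpos : 0 < E := by linarith
  rw [abs_lt]
  constructor
  · have hlow : (1 - 7*δ) * H < D * E := by
      nlinarith [mul_le_mul hD1 hE1 (by linarith : (0:ℝ) ≤ 1 - δ/2) hDpos.le,
        sq_nonneg δ, mul_pos hDpos hEpos]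
    have := (lt_div_iff₀ hHpos).mpr hlow
    linarith
  · have hup : D * E < (1 + 7*δ) * H := by
      nlinarith [mul_le_mul hD2 hE2 hEpos.le (by nlinarith [sq_nonneg δ] : (0:ℝ) ≤ 1 + δ + 2*δ^2),
        mul_le_mul_of_nonneg_left hH1 (show (0:ℝ) ≤ 1 + 7*δ by linarith),
        mul_nonneg hδ0.le (show (0:ℝ) ≤ 1/2 - δ by linarith),
        mul_nonneg (mul_nonneg hδ0.le hδ0.le) (show (0:ℝ) ≤ 1/2 - δ by linarith),
        mul_nonneg (mul_nonneg (mul_nonneg hδ0.le hδ0.le) hδ0.le) (show (0:ℝ) ≤ 1/2 - δ by linarith)]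
    have := (div_lt_iff₀ hHpos).mpr hup
    linarith


/-- Full statistical guarantee for the global-purity estimator of a state
satisfying the approximate factorization conditions:
`Pr( |r₂⁽ᵉ⁾/P₂ − 1| ≥ 7δ ) ≤ 2^{4k+11} L³ / (δ² M)`. -/
theorem purity_estimation_AFC_guarantee
    {Ω : Type*} [MeasurableSpace Ω] (μ : Measure Ω) [IsProbabilityMeasure μ]
    (α2 β2 : ℝ) (hα : 0 < α2) (hβ : 0 < β2)
    (δ : ℝ) (hδ0 : 0 < δ) (hδ : δ ≤ 1/2)
    (k R L : ℕ) (hk : 2 ≤ k) (hR : 2 ≤ R) (hL : L = R * k)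
    (hkb : Real.log (α2 * L / δ) / β2 ≤ (k:ℝ))
    (P2 : ℝ) (hP2 : 0 < P2)
    (e : ℕ → ℝ)
    (he : ∀ j, 2 ≤ j → j ≤ R - 1 → |e j| ≤ α2 * Real.exp (-(β2 * k)))
    (M : ℝ)
    (hM : max ((2:ℝ) ^ (8 * k)) ((2:ℝ) ^ (4 * k + 10) * (L:ℝ) ^ 2 / δ ^ 2) ≤ M)
    (ε η : ℕ → Ω → ℝ)
    (hmε : ∀ j, Measurable (ε j)) (hmη : ∀ j, Measurable (η j))
    (hind : iIndepFun
      (Sum.elim (fun j : {j : ℕ // 1 ≤ j ∧ j ≤ R - 1} => ε j.1)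
                (fun j : {j : ℕ // 2 ≤ j ∧ j ≤ R - 1} => η j.1)) μ)
    (htailε : ∀ j, 1 ≤ j → j ≤ R - 1 → ∀ x : ℝ, 0 < x →
      μ {ω | x ≤ |ε j ω|} ≤ ENNReal.ofReal ((2:ℝ) ^ (4 * k + 3) / (x ^ 2 * M)))
    (htailη : ∀ j, 2 ≤ j → j ≤ R - 1 → ∀ x : ℝ, 0 < x →
      μ {ω | x ≤ |η j ω|} ≤ ENNReal.ofReal ((2:ℝ) ^ (2 * k + 3) / (x ^ 2 * M))) :
    μ {ω | 7 * δ ≤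
        |(P2 * ∏ j ∈ Finset.Icc 2 (R - 1), (1 + e j)) *
            ((∏ j ∈ Finset.Icc 1 (R - 1), (1 + ε j ω)) /
              (∏ j ∈ Finset.Icc 2 (R - 1), (1 + η j ω))) / P2 - 1|}
      ≤ ENNReal.ofReal ((2:ℝ) ^ (4 * k + 11) * (L:ℝ) ^ 3 / (δ ^ 2 * M)) := by
  classical
  have hLR : R ≤ L := by rw [hL]; exact Nat.le_mul_of_pos_right R (by omega)
  have hL4 : 4 ≤ L := by rw [hL]; calc 4 = 2*2 := rfl
                                   _ ≤ R * k := Nat.mul_le_mul hR hk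
  have hLpos : (0:ℝ) < L := by exact_mod_cast (by omega : 0 < L)
  have hL4' : (4:ℝ) ≤ (L:ℝ) := by exact_mod_cast hL4
  have hM0 : (0:ℝ) < M :=
    lt_of_lt_of_le (by positivity) (le_trans (le_max_left _ _) hM)
  set x : ℝ := δ / (2*L) with hx
  have hxpos : 0 < x := by positivity
  have hx1 : x ≤ 1 := by
    rw [hx, div_le_one (by positivity)]; linarith
  -- deterministic factor bound
  have hexp : α2 * Real.exp (-(β2 * k)) ≤ δ / L := by
    have hy : 0 < α2 * L / δ := div_pos (mul_pos hα hLpos) hδ0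
    have hlog : Real.log (α2 * L / δ) ≤ β2 * k := by
      rw [div_le_iff₀ hβ] at hkb; linarith
    have hexp1 : α2 * (L:ℝ) / δ ≤ Real.exp (β2 * k) := (Real.log_le_iff_le_exp hy).mp hlog
    have h2 : α2 * (L:ℝ) ≤ Real.exp (β2 * k) * δ := by
      rw [div_le_iff₀ hδ0] at hexp1; linarith
    rw [Real.exp_neg, ← div_eq_mul_inv, div_le_div_iff₀ (Real.exp_pos _) hLpos]
    linarith
  have he' : ∀ j ∈ Finset.Icc 2 (R-1), |e j| ≤ δ / L := by
    intro j hj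
    obtain ⟨hj1, hj2⟩ := Finset.mem_Icc.mp hj
    exact le_trans (he j hj1 hj2) hexp
  have hcard2 : (Finset.Icc 2 (R-1)).card ≤ L := by rw [Nat.card_Icc]; omega
  have hcard1 : (Finset.Icc 1 (R-1)).card ≤ L := by rw [Nat.card_Icc]; omega
  have hcard2' : ((Finset.Icc 2 (R-1)).card : ℝ) * (δ / L) ≤ δ := by
    calc ((Finset.Icc 2 (R-1)).card : ℝ) * (δ / L) ≤ (L:ℝ) * (δ / L) :=
          mul_le_mul_of_nonneg_right (by exact_mod_cast hcard2) (by positivity)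
    _ = δ := by field_simp
  have hcard1' : ((Finset.Icc 1 (R-1)).card : ℝ) * x ≤ δ/2 := by
    calc ((Finset.Icc 1 (R-1)).card : ℝ) * x ≤ (L:ℝ) * x :=
          mul_le_mul_of_nonneg_right (by exact_mod_cast hcard1) hxpos.le
    _ = δ/2 := by rw [hx]; field_simp
  have hcard2x : ((Finset.Icc 2 (R-1)).card : ℝ) * x ≤ δ/2 := by
    calc ((Finset.Icc 2 (R-1)).card : ℝ) * x ≤ (L:ℝ) * x :=
          mul_le_mul_of_nonneg_right (by exact_mod_cast hcard2) hxpos.le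
    _ = δ/2 := by rw [hx]; field_simp
  have hδL1 : δ / L ≤ 1 := by rw [div_le_one hLpos]; linarith
  obtain ⟨hD1, hD2⟩ := aux_prod_bounds (Finset.Icc 2 (R-1)) e (δ/L) δ
    (by positivity) hδL1 he' hcard2' hδ
  -- key deterministic claim
  have key : ∀ ω : Ω, (∀ j ∈ Finset.Icc 1 (R-1), |ε j ω| ≤ x) →
      (∀ j ∈ Finset.Icc 2 (R-1), |η j ω| ≤ x) →
      |(P2 * ∏ j ∈ Finset.Icc 2 (R - 1), (1 + e j)) *
          ((∏ j ∈ Finset.Icc 1 (R - 1), (1 + ε j ω)) /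
            (∏ j ∈ Finset.Icc 2 (R - 1), (1 + η j ω))) / P2 - 1| < 7 * δ := by
    intro ω hεb hηb
    obtain ⟨hE1, hE2⟩ := aux_prod_bounds (Finset.Icc 1 (R-1)) (fun j => ε j ω) x (δ/2)
      hxpos.le hx1 hεb hcard1' (by linarith)
    obtain ⟨hH1, hH2⟩ := aux_prod_bounds (Finset.Icc 2 (R-1)) (fun j => η j ω) x (δ/2)
      hxpos.le hx1 hηb hcard2x (by linarith)
    set D := ∏ j ∈ Finset.Icc 2 (R - 1), (1 + e j) with hDdef
    set E := ∏ j ∈ Finset.Icc 1 (R - 1), (1 + ε j ω) with hEdef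
    set H := ∏ j ∈ Finset.Icc 2 (R - 1), (1 + η j ω) with hHdef
    have hsimp : P2 * D * (E / H) / P2 = D * E / H := by
      rw [mul_comm P2 D, mul_assoc, mul_comm P2 (E / H), ← mul_assoc, mul_div_assoc,
        div_self hP2.ne', mul_one, mul_div_assoc]
    rw [hsimp]
    exact aux_core δ D E H hδ0 hδ hD1 hD2 hE1 hE2 hH1 hH2
  -- union bound
  set c : ℝ≥0∞ := ENNReal.ofReal ((2:ℝ) ^ (4 * k + 3) / (x ^ 2 * M)) with hc
  set A : ℕ → Set Ω := fun j => {ω | x ≤ |ε j ω|} with hA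
  set B : ℕ → Set Ω := fun j => {ω | x ≤ |η j ω|} with hB
  have hsub : {ω | 7 * δ ≤
        |(P2 * ∏ j ∈ Finset.Icc 2 (R - 1), (1 + e j)) *
            ((∏ j ∈ Finset.Icc 1 (R - 1), (1 + ε j ω)) /
              (∏ j ∈ Finset.Icc 2 (R - 1), (1 + η j ω))) / P2 - 1|} ⊆
      (⋃ j ∈ Finset.Icc 1 (R-1), A j) ∪ (⋃ j ∈ Finset.Icc 2 (R-1), B j) := by
    intro ω hω
    by_contra hcon
    simp only [Set.mem_union, Set.mem_iUnion, not_or, not_exists] at hcon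
    obtain ⟨hc1, hc2⟩ := hcon
    have h1 : ∀ j ∈ Finset.Icc 1 (R-1), |ε j ω| ≤ x := by
      intro j hj
      have := hc1 j hj
      simp only [hA, Set.mem_setOf_eq, not_le] at this
      linarith
    have h2 : ∀ j ∈ Finset.Icc 2 (R-1), |η j ω| ≤ x := by
      intro j hj
      have := hc2 j hj
      simp only [hB, Set.mem_setOf_eq, not_le] at this
      linarith
    exact absurd hω (not_le.mpr (key ω h1 h2))
  have hεbound : ∀ j ∈ Finset.Icc 1 (R-1), μ (A j) ≤ c := by
    intro j hj
    obtain ⟨hj1, hj2⟩ := Finset.mem_Icc.mp hj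
    exact htailε j hj1 hj2 x hxpos
  have hηbound : ∀ j ∈ Finset.Icc 2 (R-1), μ (B j) ≤ c := by
    intro j hj
    obtain ⟨hj1, hj2⟩ := Finset.mem_Icc.mp hj
    refine le_trans (htailη j hj1 hj2 x hxpos) (ENNReal.ofReal_le_ofReal ?_)
    apply div_le_div_of_nonneg_right ?_ (by positivity)
    · exact pow_le_pow_right₀ (by norm_num) (by omega)
  have harith : (((Finset.Icc 1 (R-1)).card + (Finset.Icc 2 (R-1)).card : ℕ) : ℝ) *
      ((2:ℝ) ^ (4 * k + 3) / (x ^ 2 * M)) ≤ (2:ℝ) ^ (4 * k + 11) * (L:ℝ) ^ 3 / (δ ^ 2 * M) := by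
    have hcs : (((Finset.Icc 1 (R-1)).card + (Finset.Icc 2 (R-1)).card : ℕ) : ℝ) ≤ 2 * L := by
      have : (Finset.Icc 1 (R-1)).card + (Finset.Icc 2 (R-1)).card ≤ 2 * L := by omega
      exact_mod_cast this
    have hx2 : x ^ 2 = δ^2 / (4 * L^2) := by rw [hx]; field_simp; ring
    have hpow : (2:ℝ) ^ (4 * k + 11) = (2:ℝ) ^ (4 * k + 3) * 2^8 := by
      rw [← pow_add]
    have hp3 : (0:ℝ) < (2:ℝ) ^ (4 * k + 3) := by positivity
    calc (((Finset.Icc 1 (R-1)).card + (Finset.Icc 2 (R-1)).card : ℕ) : ℝ) *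
        ((2:ℝ) ^ (4 * k + 3) / (x ^ 2 * M))
        ≤ 2 * (L:ℝ) * ((2:ℝ) ^ (4 * k + 3) / (x ^ 2 * M)) :=
          mul_le_mul_of_nonneg_right hcs (by positivity)
      _ = (2:ℝ) ^ (4 * k + 3) * (8 * (L:ℝ)^3) / (δ^2 * M) := by
          rw [hx2]; field_simp; ring
      _ ≤ (2:ℝ) ^ (4 * k + 11) * (L:ℝ) ^ 3 / (δ ^ 2 * M) := by
          rw [hpow]
          apply div_le_div_of_nonneg_right ?_ (by positivity)
          nlinarith [hp3, pow_pos hLpos 3]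
  calc μ {ω | 7 * δ ≤
        |(P2 * ∏ j ∈ Finset.Icc 2 (R - 1), (1 + e j)) *
            ((∏ j ∈ Finset.Icc 1 (R - 1), (1 + ε j ω)) /
              (∏ j ∈ Finset.Icc 2 (R - 1), (1 + η j ω))) / P2 - 1|}
      ≤ μ ((⋃ j ∈ Finset.Icc 1 (R-1), A j) ∪ (⋃ j ∈ Finset.Icc 2 (R-1), B j)) :=
        measure_mono hsub
    _ ≤ μ (⋃ j ∈ Finset.Icc 1 (R-1), A j) + μ (⋃ j ∈ Finset.Icc 2 (R-1), B j) :=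
        measure_union_le _ _
    _ ≤ (∑ j ∈ Finset.Icc 1 (R-1), μ (A j)) + ∑ j ∈ Finset.Icc 2 (R-1), μ (B j) :=
        add_le_add (measure_biUnion_finset_le _ _) (measure_biUnion_finset_le _ _)
    _ ≤ (∑ _j ∈ Finset.Icc 1 (R-1), c) + ∑ _j ∈ Finset.Icc 2 (R-1), c :=
        add_le_add (Finset.sum_le_sum hεbound) (Finset.sum_le_sum hηbound)
    _ = (((Finset.Icc 1 (R-1)).card + (Finset.Icc 2 (R-1)).card : ℕ) : ℝ≥0∞) * c := by
        simp [Finset.sum_const, nsmul_eq_mul]; push_cast; ring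
    _ = ENNReal.ofReal ((((Finset.Icc 1 (R-1)).card + (Finset.Icc 2 (R-1)).card : ℕ) : ℝ) *
          ((2:ℝ) ^ (4 * k + 3) / (x ^ 2 * M))) := by
        rw [hc, ← ENNReal.ofReal_natCast, ← ENNReal.ofReal_mul (by positivity)]
    _ ≤ ENNReal.ofReal ((2:ℝ) ^ (4 * k + 11) * (L:ℝ) ^ 3 / (δ ^ 2 * M)) :=
        ENNReal.ofReal_le_ofReal harith
end

section
/- Let α_3, β_3 > 0 be real numbers, let 0 < δ ≤ 1/2, and let k ≥ 1 be an integer with k ≥ log(2 α_3 / δ) / (2 β_3), so that α_3 e^{−2 β_3 k} ≤ δ/2. Let p̃, p, P_A, P_B be real numbers with |p| ≤ 1, P_A ≥ 2^{−2k}, P_B ≥ 2^{−2k}, and | p/(P_A P_B) − p̃ | ≤ α_3 e^{−2 β_3 k}. Let M be a real number with M ≥ 27 · 2^{11k+11} / δ², and let X, Y_A, Y_B be mutually independent real-valued random variables satisfying, for every α > 0, Pr( |X − p| ≥ α ) ≤ 27 · 2^{2k}/(α² M), Pr( |Y_A/P_A − 1| ≥ α ) ≤ 27 · 2^{3k}/(α²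 M), and Pr( |Y_B/P_B − 1| ≥ α ) ≤ 27 · 2^{3k}/(α² M). Then the random variable S = X/(Y_A Y_B) satisfies Pr( |S − p̃| ≥ δ ) ≤ 81 · 2^{11k+11} / (M δ²). -/
set_option maxHeartbeats 1000000


open MeasureTheory ProbabilityTheory

/-- Full statistical guarantee for the normalized third PT-moment estimator
of a state satisfying the approximate factorization conditions:
`Pr( |S − p̃| ≥ δ ) ≤ 81 · 2^{11k+11} / (M δ²)`. -/
theorem pt_moment_estimation_AFC_guarantee
    {Ω : Type*} [MeasurableSpace Ω] (μ : Measure Ω) [IsProbabilityMeasure μ]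
    (α3 β3 : ℝ) (hα : 0 < α3) (hβ : 0 < β3)
    (δ : ℝ) (hδ0 : 0 < δ) (hδ : δ ≤ 1/2)
    (k : ℕ) (hk : 1 ≤ k)
    (hkb : Real.log (2 * α3 / δ) / (2 * β3) ≤ (k:ℝ))
    (ptil p PA PB : ℝ) (hp : |p| ≤ 1)
    (hPA : ((2:ℝ) ^ (2 * k))⁻¹ ≤ PA) (hPB : ((2:ℝ) ^ (2 * k))⁻¹ ≤ PB)
    (happ : |p / (PA * PB) - ptil| ≤ α3 * Real.exp (-(2 * β3 * k)))
    (M : ℝ) (hM : 27 * (2:ℝ) ^ (11 * k + 11) / δ ^ 2 ≤ M)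
    (X YA YB : Ω → ℝ)
    (hXm : Measurable X) (hYAm : Measurable YA) (hYBm : Measurable YB)
    (hind : iIndepFun ![X, YA, YB] μ)
    (htailX : ∀ α : ℝ, 0 < α →
      μ {ω | α ≤ |X ω - p|} ≤ ENNReal.ofReal (27 * (2:ℝ) ^ (2 * k) / (α ^ 2 * M)))
    (htailA : ∀ α : ℝ, 0 < α →
      μ {ω | α ≤ |YA ω / PA - 1|} ≤ ENNReal.ofReal (27 * (2:ℝ) ^ (3 * k) / (α ^ 2 * M)))
    (htailB : ∀ α : ℝ, 0 < α →
      μ {ω | α ≤ |YB ω / PB - 1|} ≤ ENNReal.ofReal (27 * (2:ℝ) ^ (3 * k) / (α ^ 2 * M))) :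
    μ {ω | δ ≤ |X ω / (YA ω * YB ω) - ptil|}
      ≤ ENNReal.ofReal (81 * (2:ℝ) ^ (11 * k + 11) / (M * δ ^ 2)) := by
  have hM0 : 0 < M := lt_of_lt_of_le (by positivity) hM
  set εX : ℝ := δ / 2 ^ (4 * k + 4) with hεXdef
  set t : ℝ := δ / 2 ^ (4 * k + 5) with htdef
  have hεX0 : 0 < εX := by positivity
  have ht0 : 0 < t := by positivity
  have hPA0 : (0:ℝ) < PA := lt_of_lt_of_le (by positivity) hPA
  have hPB0 : (0:ℝ) < PB := lt_of_lt_of_le (by positivity) hPB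
  -- exponential smallness
  have heps : α3 * Real.exp (-(2 * β3 * k)) ≤ δ / 2 := by
    have h1 : Real.log (2 * α3 / δ) ≤ 2 * β3 * k := by
      rw [div_le_iff₀ (by positivity)] at hkb; linarith
    have h2 : Real.exp (-(2 * β3 * k)) ≤ Real.exp (-Real.log (2 * α3 / δ)) :=
      Real.exp_le_exp.mpr (by linarith)
    have h3 : Real.exp (-Real.log (2 * α3 / δ)) = δ / (2 * α3) := by
      rw [Real.exp_neg, Real.exp_log (by positivity)]
      rw [inv_div]
    rw [h3] at h2
    calc α3 * Real.exp (-(2 * β3 * k)) ≤ α3 * (δ / (2 * α3)) := by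
          exact mul_le_mul_of_nonneg_left h2 hα.le
      _ = δ / 2 := by field_simp
  have happ' : |p / (PA * PB) - ptil| ≤ δ / 2 := happ.trans heps
  -- power facts
  have hQ1 : (1:ℝ) ≤ 2 ^ (4 * k) := one_le_pow₀ (by norm_num)
  have ht14 : t ≤ 1 / 4 := by
    rw [htdef]
    have h2 : (2:ℝ) ≤ 2 ^ (4 * k + 5) := by
      calc (2:ℝ) = 2 ^ 1 := (pow_one 2).symm
        _ ≤ 2 ^ (4 * k + 5) := pow_le_pow_right₀ (by norm_num) (by omega)
    calc δ / 2 ^ (4 * k + 5) ≤ δ / 2 := by gcongr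
      _ ≤ 1 / 4 := by linarith
  -- set inclusion
  have hsub : {ω | δ ≤ |X ω / (YA ω * YB ω) - ptil|} ⊆
      {ω | εX ≤ |X ω - p|} ∪ ({ω | t ≤ |YA ω / PA - 1|} ∪ {ω | t ≤ |YB ω / PB - 1|}) := by
    intro ω hω
    simp only [Set.mem_setOf_eq] at hω
    by_contra hc
    simp only [Set.mem_union, Set.mem_setOf_eq, not_or, not_le] at hc
    obtain ⟨h1, h2, h3⟩ := hc
    set a : ℝ := YA ω / PA with hadef
    set b : ℝ := YB ω / PB with hbdef
    rw [abs_lt] at h2 h3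
    have ha1 : 3 / 4 < a := by linarith
    have hb1 : 3 / 4 < b := by linarith
    have hab0 : (0:ℝ) < a * b := by nlinarith
    have hYAB : YA ω * YB ω = (a * b) * (PA * PB) := by
      rw [hadef, hbdef]; field_simp
    -- |a*b - 1| < 3t
    have hab_lt : a * b - 1 < 3 * t := by nlinarith
    have hab_gt : -(3 * t) < a * b - 1 := by nlinarith
    have hab3t : |a * b - 1| < 3 * t := abs_lt.mpr ⟨hab_gt, hab_lt⟩
    -- numerator bound
    have htri : |X ω - p * (a * b)| ≤ |X ω - p| + |p| * |a * b - 1| := by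
      calc |X ω - p * (a * b)| = |(X ω - p) + (-(p * (a * b - 1)))| := by
            congr 1; ring
        _ ≤ |X ω - p| + |(-(p * (a * b - 1)))| := abs_add_le _ _
        _ = |X ω - p| + |p| * |a * b - 1| := by rw [abs_neg, abs_mul]
    have hm1 : |p| * |a * b - 1| ≤ 3 * t :=
      calc |p| * |a * b - 1| ≤ 1 * (3 * t) :=
            mul_le_mul hp hab3t.le (abs_nonneg _) one_pos.le
        _ = 3 * t := one_mul _
    have habs : |X ω - p * (a * b)| < εX + 3 * t := by linarith
    -- εX + 3t in terms of Q := 2^(4k)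
    have he1 : (2:ℝ) ^ (4 * k + 4) = 2 ^ (4 * k) * 16 := by rw [pow_add]; norm_num
    have he2 : (2:ℝ) ^ (4 * k + 5) = 2 ^ (4 * k) * 32 := by rw [pow_add]; norm_num
    have hQ0 : (0:ℝ) < 2 ^ (4 * k) := by positivity
    have hsum : εX + 3 * t = (5 / 32) * (δ / 2 ^ (4 * k)) := by
      rw [hεXdef, htdef, he1, he2]; field_simp; ring
    -- denominator bound
    have hD : ((2:ℝ) ^ (4 * k))⁻¹ ≤ PA * PB := by
      have : ((2:ℝ) ^ (2 * k))⁻¹ * ((2:ℝ) ^ (2 * k))⁻¹ ≤ PA * PB := by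
        apply mul_le_mul hPA hPB (by positivity) hPA0.le
      calc ((2:ℝ) ^ (4 * k))⁻¹ = ((2:ℝ) ^ (2 * k))⁻¹ * ((2:ℝ) ^ (2 * k))⁻¹ := by
            rw [show 4 * k = 2 * k + 2 * k from by omega, pow_add, mul_inv]
        _ ≤ PA * PB := this
    have hD0 : (0:ℝ) < PA * PB := mul_pos hPA0 hPB0
    have habD0 : (0:ℝ) < (a * b) * (PA * PB) := mul_pos hab0 hD0
    have habD : (9 / 16) * ((2:ℝ) ^ (4 * k))⁻¹ ≤ (a * b) * (PA * PB) := by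
      have hab916 : (9:ℝ) / 16 ≤ a * b := by nlinarith
      calc (9 / 16) * ((2:ℝ) ^ (4 * k))⁻¹ ≤ (a * b) * ((2:ℝ) ^ (4 * k))⁻¹ := by
            apply mul_le_mul_of_nonneg_right hab916 (by positivity)
        _ ≤ (a * b) * (PA * PB) := by
            apply mul_le_mul_of_nonneg_left hD hab0.le
    -- the difference identity
    have hident : X ω / (YA ω * YB ω) - p / (PA * PB)
        = (X ω - p * (a * b)) / ((a * b) * (PA * PB)) := by
      rw [hYAB]; field_simp
    have hfrac : |X ω / (YA ω * YB ω) - p / (PA * PB)| < δ / 2 := by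
      rw [hident, abs_div, abs_of_pos habD0, div_lt_iff₀ habD0]
      have hkey : εX + 3 * t ≤ δ / 2 * ((a * b) * (PA * PB)) := by
        rw [hsum]
        calc (5 / 32) * (δ / 2 ^ (4 * k)) ≤ δ / 2 * ((9 / 16) * ((2:ℝ) ^ (4 * k))⁻¹) := by
              have hq : δ / 2 * ((9 / 16) * ((2:ℝ) ^ (4 * k))⁻¹) = (9 / 32) * (δ / 2 ^ (4 * k)) := by
                field_simp; ring
              rw [hq]
              apply mul_le_mul_of_nonneg_right (by norm_num) (by positivity)
          _ ≤ δ / 2 * ((a * b) * (PA * PB)) := by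
              apply mul_le_mul_of_nonneg_left habD (by linarith)
      linarith
    have : |X ω / (YA ω * YB ω) - ptil| < δ := by
      calc |X ω / (YA ω * YB ω) - ptil|
          ≤ |X ω / (YA ω * YB ω) - p / (PA * PB)| + |p / (PA * PB) - ptil| := by
            have := abs_sub_le (X ω / (YA ω * YB ω)) (p / (PA * PB)) ptil
            linarith [this]
        _ < δ / 2 + δ / 2 := by
            apply add_lt_add_of_lt_of_le hfrac happ'
        _ = δ := by ring
    linarith
  -- union bound
  have hmeas : μ {ω | δ ≤ |X ω / (YA ω * YB ω) - ptil|}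
      ≤ ENNReal.ofReal (27 * (2:ℝ) ^ (2 * k) / (εX ^ 2 * M))
        + (ENNReal.ofReal (27 * (2:ℝ) ^ (3 * k) / (t ^ 2 * M))
          + ENNReal.ofReal (27 * (2:ℝ) ^ (3 * k) / (t ^ 2 * M))) := by
    calc μ {ω | δ ≤ |X ω / (YA ω * YB ω) - ptil|}
        ≤ μ ({ω | εX ≤ |X ω - p|} ∪ ({ω | t ≤ |YA ω / PA - 1|} ∪ {ω | t ≤ |YB ω / PB - 1|})) :=
          measure_mono hsub
      _ ≤ μ {ω | εX ≤ |X ω - p|} + μ ({ω | t ≤ |YA ω / PA - 1|} ∪ {ω | t ≤ |YB ω / PB - 1|}) :=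
          measure_union_le _ _
      _ ≤ μ {ω | εX ≤ |X ω - p|}
          + (μ {ω | t ≤ |YA ω / PA - 1|} + μ {ω | t ≤ |YB ω / PB - 1|}) := by
          gcongr
          exact measure_union_le _ _
      _ ≤ _ := by
          gcongr
          · exact htailX εX hεX0
          · exact htailA t ht0
          · exact htailB t ht0
  refine hmeas.trans ?_
  rw [← ENNReal.ofReal_add (by positivity) (by positivity),
      ← ENNReal.ofReal_add (by positivity) (by positivity)]
  apply ENNReal.ofReal_le_ofReal
  -- real arithmetic
  have hεX2 : εX ^ 2 = δ ^ 2 / 2 ^ (8 * k + 8) := by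
    rw [hεXdef, div_pow, ← pow_mul]
    congr 2
    omega
  have ht2 : t ^ 2 = δ ^ 2 / 2 ^ (8 * k + 10) := by
    rw [htdef, div_pow, ← pow_mul]
    congr 2
    omega
  have hpow1 : (2:ℝ) ^ (2 * k) * 2 ^ (8 * k + 8) ≤ 2 ^ (11 * k + 11) := by
    rw [← pow_add]
    exact pow_le_pow_right₀ (by norm_num) (by omega)
  have hpow2 : (2:ℝ) ^ (3 * k) * 2 ^ (8 * k + 10) ≤ 2 ^ (11 * k + 10) := by
    rw [← pow_add]
    exact pow_le_pow_right₀ (by norm_num) (by omega)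
  have hpow3 : (2:ℝ) ^ (11 * k + 10) * 2 = 2 ^ (11 * k + 11) := by
    rw [← pow_succ]
  have hT1 : 27 * (2:ℝ) ^ (2 * k) / (εX ^ 2 * M) ≤ 27 * 2 ^ (11 * k + 11) / (M * δ ^ 2) := by
    rw [hεX2]
    rw [div_le_div_iff₀ (by positivity) (by positivity)]
    have : (0:ℝ) < δ ^ 2 := by positivity
    calc 27 * (2:ℝ) ^ (2 * k) * (M * δ ^ 2)
        = 27 * ((2:ℝ) ^ (2 * k) * 2 ^ (8 * k + 8)) * (M * δ ^ 2) / 2 ^ (8 * k + 8) := by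
          field_simp
      _ ≤ 27 * (2:ℝ) ^ (11 * k + 11) * (M * δ ^ 2) / 2 ^ (8 * k + 8) := by gcongr
      _ = 27 * 2 ^ (11 * k + 11) * (δ ^ 2 / 2 ^ (8 * k + 8) * M) := by field_simp
  have hT2 : 27 * (2:ℝ) ^ (3 * k) / (t ^ 2 * M) ≤ 27 * 2 ^ (11 * k + 10) / (M * δ ^ 2) := by
    rw [ht2]
    rw [div_le_div_iff₀ (by positivity) (by positivity)]
    calc 27 * (2:ℝ) ^ (3 * k) * (M * δ ^ 2)
        = 27 * ((2:ℝ) ^ (3 * k) * 2 ^ (8 * k + 10)) * (M * δ ^ 2) / 2 ^ (8 * k + 10) := by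
          field_simp
      _ ≤ 27 * (2:ℝ) ^ (11 * k + 10) * (M * δ ^ 2) / 2 ^ (8 * k + 10) := by gcongr
      _ = 27 * 2 ^ (11 * k + 10) * (δ ^ 2 / 2 ^ (8 * k + 10) * M) := by field_simp
  have hfin : 27 * (2:ℝ) ^ (11 * k + 11) / (M * δ ^ 2)
      + (27 * (2:ℝ) ^ (11 * k + 10) / (M * δ ^ 2) + 27 * (2:ℝ) ^ (11 * k + 10) / (M * δ ^ 2))
      ≤ 81 * (2:ℝ) ^ (11 * k + 11) / (M * δ ^ 2) := by
    rw [← add_div, ← add_div]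
    apply div_le_div_of_nonneg_right ?_ ?_ |>.trans_eq rfl
    · nlinarith [hpow3, pow_pos (by norm_num : (0:ℝ) < 2) (11 * k + 10)]
    · positivity
  linarith [hT1, hT2]
end

section
/- Let χ ≥ 1 be an integer, let ζ_1, ζ_2 > 0 be real numbers, and set ζ = max(ζ_1, ζ_2). Let λ_1, …, λ_{χ−1} be complex numbers with |λ_j| ≤ e^{−1/ζ_1} for all j, let μ_0 be a nonzero complex number, and let μ_1, …, μ_{χ²−1} be complex numbers with |μ_j/μ_0| ≤ e^{−1/ζ_2} for all j ≥ 1. Then for every real L ≥ ζ_1 · log(2χ) (so that 1 + Σ_{j=1}^{χ−1} λ_j^L ≠ 0), one has | ( 1 + Σ_{j=1}^{χ²−1} (μ_j/μ_0)^{L} ) / ( 1 + Σ_{j=1}^{χ−1} λ_j^{L} )² − 1 | ≤ 2⁴ χ² e^{−L/ζ}. -/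
/-- Bound on the relative deviation of the MPDO purity ratio coming from
the subleading transfer-matrix eigenvalues. -/
theorem mpdo_purity_eigenvalue_bound
    (χ : ℕ) (hχ : 1 ≤ χ) (ζ1 ζ2 : ℝ) (hζ1 : 0 < ζ1) (hζ2 : 0 < ζ2)
    (lam : ℕ → ℂ)
    (hlam : ∀ j, 1 ≤ j → j ≤ χ - 1 → ‖lam j‖ ≤ Real.exp (-1 / ζ1))
    (μ0 : ℂ) (hμ0 : μ0 ≠ 0) (μ : ℕ → ℂ)
    (hμ : ∀ j, 1 ≤ j → j ≤ χ ^ 2 - 1 → ‖μ j / μ0‖ ≤ Real.exp (-1 / ζ2))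
    (L : ℕ) (hL0 : 0 < L) (hL : ζ1 * Real.log (2 * χ) ≤ (L:ℝ)) :
    ‖(1 + ∑ j ∈ Finset.Icc 1 (χ ^ 2 - 1), (μ j / μ0) ^ L) /
          (1 + ∑ j ∈ Finset.Icc 1 (χ - 1), lam j ^ L) ^ 2 - 1‖
      ≤ 2 ^ 4 * (χ:ℝ) ^ 2 * Real.exp (-(L:ℝ) / max ζ1 ζ2) := by
  set ζ := max ζ1 ζ2 with hζdef
  have hζpos : 0 < ζ := lt_max_of_lt_left hζ1
  have hχR : (1:ℝ) ≤ (χ:ℝ) := by exact_mod_cast hχ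
  have hLnn : (0:ℝ) ≤ (L:ℝ) := Nat.cast_nonneg L
  set E1 := Real.exp (-(L:ℝ)/ζ1) with hE1def
  set E2 := Real.exp (-(L:ℝ)/ζ2) with hE2def
  set E := Real.exp (-(L:ℝ)/ζ) with hEdef
  have hEpos : 0 < E := Real.exp_pos _
  have hE1le : E1 ≤ E := by
    apply Real.exp_le_exp.2
    rw [neg_div, neg_div, neg_le_neg_iff]
    gcongr
    exact le_max_left _ _
  have hE2le : E2 ≤ E := by
    apply Real.exp_le_exp.2
    rw [neg_div, neg_div, neg_le_neg_iff]
    gcongr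
    exact le_max_right _ _
  have hE1le1 : E1 ≤ 1 := by
    rw [hE1def, Real.exp_le_one_iff]
    exact div_nonpos_of_nonpos_of_nonneg (by linarith) hζ1.le
  set S := ∑ j ∈ Finset.Icc 1 (χ - 1), lam j ^ L with hSdef
  set T := ∑ j ∈ Finset.Icc 1 (χ ^ 2 - 1), (μ j / μ0) ^ L with hTdef
  have hpow : ∀ (c : ℝ), 0 < c → Real.exp (-1/c) ^ L = Real.exp (-(L:ℝ)/c) := by
    intro c hc
    rw [← Real.exp_nat_mul]
    congr 1
    ring
  have hSbound : ‖S‖ ≤ ((χ:ℝ) - 1) * E1 := by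
    calc ‖S‖ ≤ ∑ j ∈ Finset.Icc 1 (χ - 1), ‖lam j ^ L‖ :=
          norm_sum_le _ _
      _ ≤ ∑ j ∈ Finset.Icc 1 (χ - 1), E1 := by
          apply Finset.sum_le_sum
          intro j hj
          rw [Finset.mem_Icc] at hj
          rw [norm_pow, hE1def, ← hpow ζ1 hζ1]
          exact pow_le_pow_left₀ (norm_nonneg _) (hlam j hj.1 hj.2) L
      _ = ((χ - 1 : ℕ) : ℝ) * E1 := by
          rw [Finset.sum_const, Nat.card_Icc]
          simp [nsmul_eq_mul]
      _ ≤ ((χ:ℝ) - 1) * E1 := by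
          apply mul_le_mul_of_nonneg_right _ (Real.exp_pos _).le
          rw [Nat.cast_sub hχ]; simp
  have hTbound : ‖T‖ ≤ (χ:ℝ)^2 * E2 := by
    calc ‖T‖ ≤ ∑ j ∈ Finset.Icc 1 (χ^2 - 1), ‖(μ j / μ0) ^ L‖ :=
          norm_sum_le _ _
      _ ≤ ∑ j ∈ Finset.Icc 1 (χ^2 - 1), E2 := by
          apply Finset.sum_le_sum
          intro j hj
          rw [Finset.mem_Icc] at hj
          rw [norm_pow, hE2def, ← hpow ζ2 hζ2]
          exact pow_le_pow_left₀ (norm_nonneg _) (hμ j hj.1 hj.2) L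
      _ = ((χ^2 - 1 : ℕ) : ℝ) * E2 := by
          rw [Finset.sum_const, Nat.card_Icc]
          simp [nsmul_eq_mul]
      _ ≤ (χ:ℝ)^2 * E2 := by
          apply mul_le_mul_of_nonneg_right _ (Real.exp_pos _).le
          calc ((χ^2 - 1 : ℕ) : ℝ) ≤ ((χ^2 : ℕ) : ℝ) := by exact_mod_cast Nat.sub_le _ _
            _ = (χ:ℝ)^2 := by push_cast; ring
  have hE1half : E1 ≤ 1 / (2 * χ) := by
    rw [hE1def]
    have hlog : -(L:ℝ)/ζ1 ≤ Real.log (1 / (2 * χ)) := by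
      rw [Real.log_div one_ne_zero (by positivity), Real.log_one]
      rw [div_le_iff₀ hζ1]
      nlinarith [hL]
    calc Real.exp (-(L:ℝ)/ζ1) ≤ Real.exp (Real.log (1 / (2 * χ))) := Real.exp_le_exp.2 hlog
      _ = 1 / (2 * χ) := Real.exp_log (by positivity)
  have hShalf : ‖S‖ ≤ 1 / 2 := by
    calc ‖S‖ ≤ ((χ:ℝ) - 1) * E1 := hSbound
      _ ≤ ((χ:ℝ) - 1) * (1 / (2 * χ)) := by
          apply mul_le_mul_of_nonneg_left hE1half (by linarith)
      _ ≤ 1 / 2 := by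
          rw [mul_one_div, div_le_div_iff₀ (by positivity) two_pos]
          linarith
  have hden : (1:ℝ)/2 ≤ ‖1 + S‖ := by
    have h1 : ‖(1 + S) + (-S)‖ ≤ ‖1 + S‖ + ‖-S‖ :=
      norm_add_le _ _
    simp only [add_neg_cancel_right, norm_one, norm_neg] at h1
    linarith
  have hne : (1 + S) ≠ 0 := by
    intro h
    rw [h, norm_zero] at hden
    linarith
  have hrw : (1 + T) / (1 + S)^2 - 1 = (T - 2*S - S^2) / (1 + S)^2 := by
    field_simp
    ring
  rw [hrw, norm_div, norm_pow]
  have hnum : ‖T - 2*S - S^2‖ ≤ 4 * (χ:ℝ)^2 * E := by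
    have habs_sub : ∀ a b : ℂ, ‖a - b‖ ≤ ‖a‖ + ‖b‖ := by
      intro a b
      rw [sub_eq_add_neg]
      exact (norm_add_le _ _).trans (by rw [norm_neg])
    have h1 : ‖T - 2*S - S^2‖ ≤
        ‖T‖ + 2 * ‖S‖ + (‖S‖)^2 := by
      calc ‖T - 2*S - S^2‖ ≤ ‖T - 2*S‖ + ‖S^2‖ :=
            habs_sub _ _
        _ ≤ ‖T‖ + ‖2*S‖ + ‖S^2‖ := by
            gcongr
            exact habs_sub _ _
        _ = ‖T‖ + 2 * ‖S‖ + (‖S‖)^2 := by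
            rw [norm_mul, norm_pow]
            simp
    have hE1nn : 0 ≤ E1 := (Real.exp_pos _).le
    have hχm1 : (0:ℝ) ≤ (χ:ℝ) - 1 := by linarith
    have hA : ‖T‖ ≤ (χ:ℝ)^2 * E :=
      hTbound.trans (mul_le_mul_of_nonneg_left hE2le (by positivity))
    have hB : ‖S‖ ≤ ((χ:ℝ) - 1) * E :=
      hSbound.trans (mul_le_mul_of_nonneg_left hE1le hχm1)
    have hC : (‖S‖)^2 ≤ ((χ:ℝ) - 1)^2 * E := by
      calc (‖S‖)^2 ≤ (((χ:ℝ) - 1) * E1)^2 :=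
            pow_le_pow_left₀ (norm_nonneg _) hSbound 2
        _ = ((χ:ℝ) - 1)^2 * (E1 * E1) := by ring
        _ ≤ ((χ:ℝ) - 1)^2 * (1 * E) := by
            apply mul_le_mul_of_nonneg_left _ (sq_nonneg _)
            exact mul_le_mul hE1le1 hE1le hE1nn (by norm_num)
        _ = ((χ:ℝ) - 1)^2 * E := by ring
    nlinarith [h1, hA, hB, hC, hEpos.le, mul_nonneg hEpos.le (sq_nonneg ((χ:ℝ)))]
  calc ‖T - 2*S - S^2‖ / (‖1 + S‖)^2
      ≤ (4 * (χ:ℝ)^2 * E) / ((1/2)^2) := by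
        apply div_le_div₀ (by positivity) hnum (by norm_num)
        exact pow_le_pow_left₀ (by norm_num) hden 2
    _ = 2^4 * (χ:ℝ)^2 * E := by ring
end

section
/- For every real number γ with 0 ≤ γ ≤ 1/4, 0 ≤ 1 − (γ² + (1−γ)²)² / (γ³ + (1−γ)³) ≤ γ. -/
theorem gamma_ratio_bound_p3 (γ : ℝ) (h0 : 0 ≤ γ) (h1 : γ ≤ 1/4) :
    0 ≤ 1 - (γ^2 + (1-γ)^2)^2 / (γ^3 + (1-γ)^3) ∧
      1 - (γ^2 + (1-γ)^2)^2 / (γ^3 + (1-γ)^3) ≤ γ := by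
  have hD : 0 < γ^3 + (1-γ)^3 := by nlinarith [sq_nonneg γ, sq_nonneg (1-γ)]
  constructor
  · have h : (γ^2 + (1-γ)^2)^2 ≤ γ^3 + (1-γ)^3 := by
      nlinarith [sq_nonneg (γ*(1-γ)), sq_nonneg γ, mul_nonneg h0 (by linarith : (0:ℝ) ≤ 1/4 - γ)]
    have := div_le_one_of_le₀ h hD.le
    linarith
  · rw [sub_le_iff_le_add, ← sub_le_iff_le_add', le_div_iff₀ hD]
    nlinarith [mul_nonneg h0 (by linarith : (0:ℝ) ≤ 1/4 - γ), sq_nonneg γ, sq_nonneg (γ*(1-γ)), mul_nonneg (mul_nonneg h0 h0) (by linarith : (0:ℝ) ≤ 1/4 - γ)]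
end

section
/- For every real number γ with 0 ≤ γ ≤ 1/4, 0 ≤ 1 − (γ⁴ + (1−γ)⁴)² / ( (γ³ + (1−γ)³)(γ⁵ + (1−γ)⁵) ) ≤ 2γ³. -/
theorem gamma_ratio_bound_p5 (γ : ℝ) (h0 : 0 ≤ γ) (h1 : γ ≤ 1/4) :
    0 ≤ 1 - (γ^4 + (1-γ)^4)^2 / ((γ^3 + (1-γ)^3) * (γ^5 + (1-γ)^5)) ∧
      1 - (γ^4 + (1-γ)^4)^2 / ((γ^3 + (1-γ)^3) * (γ^5 + (1-γ)^5)) ≤ 2 * γ^3 := by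
  have hb : (0:ℝ) < 1 - γ := by linarith
  have h3 : (0:ℝ) < γ^3 + (1-γ)^3 := by positivity
  have h5 : (0:ℝ) < γ^5 + (1-γ)^5 := by positivity
  have hD : (0:ℝ) < (γ^3 + (1-γ)^3) * (γ^5 + (1-γ)^5) := mul_pos h3 h5
  constructor
  · rw [sub_nonneg, div_le_one hD]
    nlinarith [mul_nonneg (mul_nonneg (pow_nonneg h0 3) (pow_nonneg hb.le 3)) (sq_nonneg (2*γ-1))]
  · have key : (1 - 2*γ^3) ≤ (γ^4 + (1-γ)^4)^2 / ((γ^3 + (1-γ)^3) * (γ^5 + (1-γ)^5)) := by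
      rw [le_div_iff₀ hD]
      nlinarith [mul_nonneg (pow_nonneg h0 3) (sq_nonneg (2*γ-1)), pow_nonneg h0 3,
        mul_nonneg h0 hb.le, sq_nonneg γ, mul_nonneg (mul_nonneg h0 h0) h0,
        mul_nonneg (pow_nonneg h0 3) (pow_nonneg hb.le 3),
        mul_nonneg (mul_nonneg (pow_nonneg h0 3) (pow_nonneg hb.le 3)) (sq_nonneg (2*γ-1))]
    linarith
end

section
/- Let q ≥ 1 be an integer and let s_2, s_3, t_3 : [0, 1/4] → ℝ be continuous functions. Set K_3 = max_{γ ∈ [0,1/4]} ( s_3(γ) − s_2(γ)² t_3(γ) ) and H_3 = max_{γ ∈ [0,1/4]} | s_2(γ)² t_3(γ) |, and assume K_3 < 0 and H_3 > 0. Define γ_3 = −K_3/(4 H_3), and for an integer L ≥ 4q and γ ∈ [0, 1/4], define f_3(γ, L) = s_3(γ) − s_2(γ)² t_3(γ) · [ (γ² + (1−γ)²)² / (γ³ + (1−γ)³) ]^{L − 4q}. Then for every integer L ≥ 4q and every real γ with 0 ≤ γ ≤ min{ 1/4, γ_3 / L }, one has f_3(γ, L) ≤ K_3 / 2. -/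
/-- Violation of the `p₃`-PPT condition for depolarized FDQC states:
if `K₃ < 0` then `f₃(γ, L) ≤ K₃/2` for all `0 ≤ γ ≤ min{1/4, γ₃/L}`. -/
theorem p3_PPT_violation_uniform
    (q : ℕ) (hq : 1 ≤ q) (s2 s3 t3 : ℝ → ℝ)
    (hs2 : ContinuousOn s2 (Set.Icc 0 (1/4)))
    (hs3 : ContinuousOn s3 (Set.Icc 0 (1/4)))
    (ht3 : ContinuousOn t3 (Set.Icc 0 (1/4)))
    (K3 H3 : ℝ)
    (hK3 : IsGreatest ((fun γ => s3 γ - (s2 γ) ^ 2 * t3 γ) '' Set.Icc 0 (1/4)) K3)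
    (hH3 : IsGreatest ((fun γ => |(s2 γ) ^ 2 * t3 γ|) '' Set.Icc 0 (1/4)) H3)
    (hK3neg : K3 < 0) (hH3pos : 0 < H3)
    (L : ℕ) (hL : 4 * q ≤ L)
    (γ : ℝ) (hγ0 : 0 ≤ γ) (hγ : γ ≤ min (1/4) (-K3 / (4 * H3) / L)) :
    s3 γ - (s2 γ) ^ 2 * t3 γ *
        ((γ ^ 2 + (1 - γ) ^ 2) ^ 2 / (γ ^ 3 + (1 - γ) ^ 3)) ^ (L - 4 * q)
      ≤ K3 / 2 := by
  have hγ4 : γ ≤ 1/4 := le_trans hγ (min_le_left _ _)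
  have hmem : γ ∈ Set.Icc (0:ℝ) (1/4) := ⟨hγ0, hγ4⟩
  have hK : s3 γ - (s2 γ) ^ 2 * t3 γ ≤ K3 := hK3.2 ⟨γ, hmem, rfl⟩
  have hH : |(s2 γ) ^ 2 * t3 γ| ≤ H3 := hH3.2 ⟨γ, hmem, rfl⟩
  have hD : (0:ℝ) < γ ^ 3 + (1 - γ) ^ 3 := by nlinarith
  set b : ℝ := (γ ^ 2 + (1 - γ) ^ 2) ^ 2 / (γ ^ 3 + (1 - γ) ^ 3) with hbdef
  have hb0 : 0 ≤ b := by positivity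
  have hb1 : b ≤ 1 := by
    rw [hbdef, div_le_one hD]
    nlinarith [sq_nonneg (1 - 2*γ), mul_nonneg hγ0 (by nlinarith : (0:ℝ) ≤ (1-γ)*(1-2*γ)^2)]
  have hbγ : 1 - b ≤ γ := by
    have : (1 - γ) * (γ ^ 3 + (1 - γ) ^ 3) ≤ (γ ^ 2 + (1 - γ) ^ 2) ^ 2 := by
      nlinarith [sq_nonneg γ, hγ0]
    have h2 : 1 - γ ≤ b := by
      rw [hbdef, le_div_iff₀ hD]; linarith
    linarith
  set n : ℕ := L - 4 * q with hn
  -- Bernoulli: 1 - b^n ≤ n * (1 - b)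
  have hbern : 1 - b ^ n ≤ (n : ℝ) * (1 - b) := by
    have h := one_add_mul_le_pow (a := b - 1) (by linarith : (-2:ℝ) ≤ b - 1) n
    have hb' : (1 + (b - 1)) = b := by ring
    rw [hb'] at h
    nlinarith
  have hnL : (n : ℝ) ≤ (L : ℝ) := by
    exact_mod_cast Nat.sub_le L (4 * q)
  have hLpos : 0 < (L : ℝ) := by
    have : 0 < L := lt_of_lt_of_le (by omega) hL
    exact_mod_cast this
  have hLγ : (L : ℝ) * γ ≤ -K3 / (4 * H3) := by
    have h := le_trans hγ (min_le_right _ _)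
    rw [le_div_iff₀ hLpos] at h
    linarith [h]
  have hkey : 1 - b ^ n ≤ -K3 / (4 * H3) := by
    calc 1 - b ^ n ≤ (n : ℝ) * (1 - b) := hbern
      _ ≤ (L : ℝ) * (1 - b) := by
          apply mul_le_mul_of_nonneg_right hnL (by linarith)
      _ ≤ (L : ℝ) * γ := by
          apply mul_le_mul_of_nonneg_left hbγ (le_of_lt hLpos)
      _ ≤ -K3 / (4 * H3) := hLγ
  have hbn1 : b ^ n ≤ 1 := pow_le_one₀ hb0 hb1
  have hbn0 : 0 ≤ b ^ n := pow_nonneg hb0 n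
  have hM : (s2 γ) ^ 2 * t3 γ * (1 - b ^ n) ≤ H3 * (-K3 / (4 * H3)) := by
    calc (s2 γ) ^ 2 * t3 γ * (1 - b ^ n) ≤ |(s2 γ) ^ 2 * t3 γ| * (1 - b ^ n) := by
          apply mul_le_mul_of_nonneg_right (le_abs_self _) (by linarith)
      _ ≤ H3 * (1 - b ^ n) := by
          apply mul_le_mul_of_nonneg_right hH
          have := abs_nonneg ((s2 γ) ^ 2 * t3 γ)
          linarith
      _ ≤ H3 * (-K3 / (4 * H3)) := by
          apply mul_le_mul_of_nonneg_left hkey (le_of_lt hH3pos)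
  have hH3' : H3 * (-K3 / (4 * H3)) = -K3 / 4 := by
    field_simp
  rw [hH3'] at hM
  have : s3 γ - (s2 γ) ^ 2 * t3 γ * b ^ n
      = (s3 γ - (s2 γ) ^ 2 * t3 γ) + (s2 γ) ^ 2 * t3 γ * (1 - b ^ n) := by ring
  rw [this]
  linarith
end

section
/- Let q ≥ 1 be an integer and let s_3, s_4, s_5, t_5 : [0, 1/4] → ℝ be continuous functions. Set K_5 = max_{γ ∈ [0,1/4]} ( s_5(γ) s_3(γ) − s_4(γ)² t_5(γ) ) and H_5 = max_{γ ∈ [0,1/4]} | s_4(γ)² t_5(γ) |, and assume K_5 < 0 and H_5 > 0. Define γ_5 = ( −K_5/(8 H_5) )^{1/3}, and for an integer L ≥ 4q and γ ∈ [0, 1/4], define f_5(γ, L) = s_5(γ) s_3(γ) − s_4(γ)² t_5(γ) · [ (γ⁴ + (1−γ)⁴)² / ( (γ³ + (1−γ)³)(γ⁵ + (1−γ)⁵) ) ]^{L − 4q}. Then for every integer L ≥ 4q and every real γ with 0 ≤ γ ≤ min{ 1/4, γ_5 / L^{1/3} }, one has f_5(γ, L) ≤ K_5 / 2. -/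
set_option maxHeartbeats 1000000 in
/-- Violation of the `p₅`-PPT condition for depolarized FDQC states:
if `K₅ < 0` then `f₅(γ, L) ≤ K₅/2` for all `0 ≤ γ ≤ min{1/4, γ₅/L^{1/3}}`. -/
theorem p5_PPT_violation_uniform
    (q : ℕ) (hq : 1 ≤ q) (s3 s4 s5 t5 : ℝ → ℝ)
    (hs3 : ContinuousOn s3 (Set.Icc 0 (1/4)))
    (hs4 : ContinuousOn s4 (Set.Icc 0 (1/4)))
    (hs5 : ContinuousOn s5 (Set.Icc 0 (1/4)))
    (ht5 : ContinuousOn t5 (Set.Icc 0 (1/4)))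
    (K5 H5 : ℝ)
    (hK5 : IsGreatest ((fun γ => s5 γ * s3 γ - (s4 γ) ^ 2 * t5 γ) '' Set.Icc 0 (1/4)) K5)
    (hH5 : IsGreatest ((fun γ => |(s4 γ) ^ 2 * t5 γ|) '' Set.Icc 0 (1/4)) H5)
    (hK5neg : K5 < 0) (hH5pos : 0 < H5)
    (L : ℕ) (hL : 4 * q ≤ L)
    (γ : ℝ) (hγ0 : 0 ≤ γ)
    (hγ : γ ≤ min (1/4) ((-K5 / (8 * H5)) ^ ((1:ℝ)/3) / (L:ℝ) ^ ((1:ℝ)/3))) :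
    s5 γ * s3 γ - (s4 γ) ^ 2 * t5 γ *
        ((γ ^ 4 + (1 - γ) ^ 4) ^ 2 /
          ((γ ^ 3 + (1 - γ) ^ 3) * (γ ^ 5 + (1 - γ) ^ 5))) ^ (L - 4 * q)
      ≤ K5 / 2 := by
  have hγ2 : γ ≤ 1/4 := le_trans hγ (min_le_left _ _)
  have hmem : γ ∈ Set.Icc (0:ℝ) (1/4) := ⟨hγ0, hγ2⟩
  set b : ℝ := 1 - γ with hbdef
  set D : ℝ := (γ ^ 3 + b ^ 3) * (γ ^ 5 + b ^ 5) with hDdef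
  set N : ℝ := (γ ^ 4 + b ^ 4) ^ 2 with hNdef
  set r : ℝ := N / D with hrdef
  set n : ℕ := L - 4 * q with hndef
  clear_value b D N r n
  have hb0 : (3:ℝ)/4 ≤ b := by rw [hbdef]; linarith
  have hb0' : (0:ℝ) ≤ b := by linarith
  have hb3 : (27:ℝ)/64 ≤ b ^ 3 := by
    nlinarith [mul_nonneg (by linarith : (0:ℝ) ≤ b - 3/4) (sq_nonneg b),
      mul_nonneg (by linarith : (0:ℝ) ≤ b - 3/4) hb0']
  have hDpos : 0 < D := by
    rw [hDdef]
    have h1 : 0 < γ ^ 3 + b ^ 3 := by nlinarith [pow_nonneg hγ0 3]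
    have h2 : 0 < γ ^ 5 + b ^ 5 := by
      nlinarith [pow_nonneg hγ0 5, mul_nonneg (mul_nonneg hb0' hb0') (le_trans (by norm_num) hb3)]
    exact mul_pos h1 h2
  have hr0 : 0 ≤ r := by
    rw [hrdef]; exact div_nonneg (by rw [hNdef]; positivity) hDpos.le
  have hid : D - N = γ ^ 3 * b ^ 3 * (b - γ) ^ 2 := by rw [hDdef, hNdef]; ring
  have hnn : 0 ≤ γ ^ 3 * b ^ 3 * (b - γ) ^ 2 :=
    mul_nonneg (mul_nonneg (pow_nonneg hγ0 3) (pow_nonneg hb0' 3)) (sq_nonneg _)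
  have hr1 : r ≤ 1 := by
    rw [hrdef, div_le_one hDpos]
    linarith [hid, hnn]
  have hb8D : b ^ 8 ≤ D := by
    rw [hDdef]
    nlinarith [pow_nonneg hγ0 8, mul_nonneg (pow_nonneg hγ0 3) (pow_nonneg hb0' 5),
      mul_nonneg (pow_nonneg hγ0 5) (pow_nonneg hb0' 3)]
  have hbq : b ^ 3 * (b - γ) ^ 2 ≤ 4 * b ^ 8 := by
    have h1 : (b - γ) ^ 2 ≤ b ^ 2 := by nlinarith
    have h2 : b ^ 3 * (b - γ) ^ 2 ≤ b ^ 5 := by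
      have hx := mul_le_mul_of_nonneg_left h1 (pow_nonneg hb0' 3)
      have hy : b ^ 3 * b ^ 2 = b ^ 5 := by ring
      linarith
    have h3 : b ^ 5 ≤ 4 * b ^ 8 := by
      have hx : 0 ≤ b ^ 5 * (4 * b ^ 3 - 1) :=
        mul_nonneg (pow_nonneg hb0' 5) (by linarith)
      have hy : b ^ 5 * (4 * b ^ 3 - 1) = 4 * b ^ 8 - b ^ 5 := by ring
      linarith
    linarith
  have hrlow : 1 - 4 * γ ^ 3 ≤ r := by
    rw [hrdef, le_div_iff₀ hDpos]
    have h4 : γ ^ 3 * (b ^ 3 * (b - γ) ^ 2) ≤ γ ^ 3 * (4 * b ^ 8) :=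
      mul_le_mul_of_nonneg_left hbq (pow_nonneg hγ0 3)
    have h5 : γ ^ 3 * (4 * b ^ 8) ≤ γ ^ 3 * (4 * D) :=
      mul_le_mul_of_nonneg_left (by linarith) (pow_nonneg hγ0 3)
    have h6 : D - N ≤ γ ^ 3 * (4 * D) := by
      calc D - N = γ ^ 3 * (b ^ 3 * (b - γ) ^ 2) := by rw [hid]; ring
        _ ≤ γ ^ 3 * (4 * b ^ 8) := h4
        _ ≤ γ ^ 3 * (4 * D) := h5
    have h7 : (1 - 4 * γ ^ 3) * D = D - γ ^ 3 * (4 * D) := by ring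
    rw [h7]; linarith
  -- Bernoulli: 1 - r ^ n ≤ n * (1 - r)
  have hbern : 1 - r ^ n ≤ (n : ℝ) * (1 - r) := by
    have h := one_add_mul_le_pow (a := r - 1) (by linarith : (-2:ℝ) ≤ r - 1) n
    have h1 : 1 + (r - 1) = r := by ring
    rw [h1] at h
    have h2 : (n:ℝ) * (r - 1) = -((n:ℝ) * (1 - r)) := by ring
    linarith only [h, h2]
  have hLpos : 0 < (L : ℝ) := by
    have : 4 ≤ L := le_trans (by omega) hL
    exact_mod_cast lt_of_lt_of_le (by norm_num) this
  have hXpos : 0 < -K5 / (8 * H5) := div_pos (by linarith) (by linarith)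
  set X : ℝ := -K5 / (8 * H5) with hXdef
  clear_value X
  have hγle : γ ≤ X ^ ((1:ℝ)/3) / (L:ℝ) ^ ((1:ℝ)/3) :=
    le_trans hγ (min_le_right _ _)
  have hX3 : (X ^ ((1:ℝ)/3)) ^ (3:ℕ) = X := by
    rw [← Real.rpow_natCast (X ^ ((1:ℝ)/3)) 3, ← Real.rpow_mul hXpos.le]
    norm_num
  have hL3 : (((L:ℝ)) ^ ((1:ℝ)/3)) ^ (3:ℕ) = (L:ℝ) := by
    rw [← Real.rpow_natCast ((L:ℝ) ^ ((1:ℝ)/3)) 3, ← Real.rpow_mul hLpos.le]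
    norm_num
  have hcube : γ ^ 3 ≤ X / (L:ℝ) := by
    have h := pow_le_pow_left₀ hγ0 hγle 3
    rwa [div_pow, hX3, hL3] at h
  have hLγ3 : (L:ℝ) * γ ^ 3 ≤ X := by
    have h := mul_le_mul_of_nonneg_left hcube hLpos.le
    rw [mul_div_cancel₀ X (ne_of_gt hLpos)] at h
    linarith
  have hnL : (n : ℝ) ≤ (L : ℝ) := by rw [hndef]; exact_mod_cast Nat.sub_le L (4 * q)
  have hsmall : 1 - r ^ n ≤ -K5 / (2 * H5) := by
    have h1 : (n : ℝ) * (1 - r) ≤ (L : ℝ) * (1 - r) :=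
      mul_le_mul_of_nonneg_right hnL (by linarith)
    have h2 : (L : ℝ) * (1 - r) ≤ (L : ℝ) * (4 * γ ^ 3) :=
      mul_le_mul_of_nonneg_left (by linarith) hLpos.le
    have h3 : (L : ℝ) * (4 * γ ^ 3) ≤ 4 * X := by
      have he : (L : ℝ) * (4 * γ ^ 3) = 4 * ((L:ℝ) * γ ^ 3) := by ring
      linarith only [hLγ3, he]
    have h4 : 4 * X = -K5 / (2 * H5) := by rw [hXdef]; field_simp; ring
    linarith only [hbern, h1, h2, h3, h4]
  have hAB : s5 γ * s3 γ - (s4 γ) ^ 2 * t5 γ ≤ K5 := hK5.2 ⟨γ, hmem, rfl⟩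
  have hB : |(s4 γ) ^ 2 * t5 γ| ≤ H5 := hH5.2 ⟨γ, hmem, rfl⟩
  have hrn1 : r ^ n ≤ 1 := pow_le_one₀ hr0 hr1
  have h1rn : 0 ≤ 1 - r ^ n := by linarith
  set B : ℝ := (s4 γ) ^ 2 * t5 γ with hBdef
  have hstep : B * (1 - r ^ n) ≤ H5 * (-K5 / (2 * H5)) := by
    calc B * (1 - r ^ n) ≤ |B| * (1 - r ^ n) :=
          mul_le_mul_of_nonneg_right (le_abs_self B) h1rn
      _ ≤ H5 * (-K5 / (2 * H5)) := mul_le_mul hB hsmall h1rn hH5pos.le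
  have hH5K : H5 * (-K5 / (2 * H5)) = -K5 / 2 := by field_simp
  have hfin : B - B * r ^ n ≤ -K5 / 2 := by
    have he : B * (1 - r ^ n) = B - B * r ^ n := by ring
    linarith only [hstep, he, hH5K]
  linarith only [hAB, hfin]
end
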